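/- arXiv:2304.09980 — 3 statements merged into one kernel-verified Lean document; each statement's English description precedes it below -/
import Mathlib

section
/- For quaternions s, q with s ∉ [q] (i.e., s² - 2q₀s + |q|² ≠ 0), the pseudo-Cauchy kernel Q_{c,s}(q) = s² - 2q₀s + |q|² is invertible and the left slice hyperholomorphic Cauchy kernel S_L^{-1}(s,q) = (s - conj(q))(s² - 2q₀s + |q|²)^{-1} satisfies (q² - 2 Re(s) q + |s|²) S_L^{-1}(s,q) = conj(s) - q, equivalently S_L^{-1}(s,q) = -(q² - 2 Re(s) q + |s|²)^{-1}(q - conj(s)). -/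
open scoped Quaternion
set_option maxHeartbeats 1000000

lemma two_coe : (2 : ℍ[ℝ]) = ((2:ℝ) : ℍ[ℝ]) := by norm_cast

lemma key_symm (s q : ℍ[ℝ])
    (hP : q ^ 2 - 2 * (s.re : ℍ[ℝ]) * q + ((‖s‖ ^ 2 : ℝ) : ℍ[ℝ]) = 0) :
    s ^ 2 - 2 * (q.re : ℍ[ℝ]) * s + ((‖q‖ ^ 2 : ℝ) : ℍ[ℝ]) = 0 := by
  have hns : (‖s‖^2 : ℝ) = Quaternion.normSq s := by
    rw [pow_two, ← Quaternion.normSq_eq_norm_mul_self]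
  have hnq : (‖q‖^2 : ℝ) = Quaternion.normSq q := by
    rw [pow_two, ← Quaternion.normSq_eq_norm_mul_self]
  rw [hns] at hP
  rw [hnq]
  rw [Quaternion.ext_iff] at hP ⊢
  simp [Quaternion.normSq_def', pow_two, two_coe] at *
  obtain ⟨h1, h2, h3, h4⟩ := hP
  refine ⟨?_, ?_, ?_, ?_⟩ <;>
  nlinarith [sq_nonneg (q.re - s.re), sq_nonneg ((q.re - s.re)^2),
    sq_nonneg (s.imI*(q.re-s.re)), sq_nonneg (s.imJ*(q.re-s.re)), sq_nonneg (s.imK*(q.re-s.re)),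
    sq_nonneg (q.imI*(q.re-s.re)), sq_nonneg (q.imJ*(q.re-s.re)), sq_nonneg (q.imK*(q.re-s.re)),
    mul_self_nonneg (q.imI*(q.re-s.re)), h2, h3, h4]

lemma key_id (s q : ℍ[ℝ]) :
    (q ^ 2 - 2 * (s.re : ℍ[ℝ]) * q + ((‖s‖ ^ 2 : ℝ) : ℍ[ℝ])) * (s - star q) =
      (star s - q) * (s ^ 2 - 2 * (q.re : ℍ[ℝ]) * s + ((‖q‖ ^ 2 : ℝ) : ℍ[ℝ])) := by
  have hns : (‖s‖^2 : ℝ) = Quaternion.normSq s := by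
    rw [pow_two, ← Quaternion.normSq_eq_norm_mul_self]
  have hnq : (‖q‖^2 : ℝ) = Quaternion.normSq q := by
    rw [pow_two, ← Quaternion.normSq_eq_norm_mul_self]
  rw [hns, hnq]
  ext <;> simp [Quaternion.normSq_def', pow_two, two_coe, mul_sub, sub_mul, mul_add, add_mul] <;> ring

theorem cauchy_kernel_left_eq (s q : ℍ[ℝ])
    (h : s ^ 2 - 2 * (q.re : ℍ[ℝ]) * s + ((‖q‖ ^ 2 : ℝ) : ℍ[ℝ]) ≠ 0) :
    q ^ 2 - 2 * (s.re : ℍ[ℝ]) * q + ((‖s‖ ^ 2 : ℝ) : ℍ[ℝ]) ≠ 0 ∧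
    (q ^ 2 - 2 * (s.re : ℍ[ℝ]) * q + ((‖s‖ ^ 2 : ℝ) : ℍ[ℝ])) *
        ((s - star q) * (s ^ 2 - 2 * (q.re : ℍ[ℝ]) * s + ((‖q‖ ^ 2 : ℝ) : ℍ[ℝ]))⁻¹) =
      star s - q ∧
    (s - star q) * (s ^ 2 - 2 * (q.re : ℍ[ℝ]) * s + ((‖q‖ ^ 2 : ℝ) : ℍ[ℝ]))⁻¹ =
      -((q ^ 2 - 2 * (s.re : ℍ[ℝ]) * q + ((‖s‖ ^ 2 : ℝ) : ℍ[ℝ]))⁻¹ * (q - star s)) := by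
  set Q := s ^ 2 - 2 * (q.re : ℍ[ℝ]) * s + ((‖q‖ ^ 2 : ℝ) : ℍ[ℝ]) with hQ
  set P := q ^ 2 - 2 * (s.re : ℍ[ℝ]) * q + ((‖s‖ ^ 2 : ℝ) : ℍ[ℝ]) with hPd
  have hP : P ≠ 0 := fun h0 => h (key_symm s q h0)
  have hid : P * (s - star q) = (star s - q) * Q := key_id s q
  have h2 : P * ((s - star q) * Q⁻¹) = star s - q := by
    rw [← mul_assoc, hid, mul_assoc, mul_inv_cancel₀ h, mul_one]
  refine ⟨hP, h2, ?_⟩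
  have := congrArg (fun x => P⁻¹ * x) h2
  simp only [← mul_assoc, inv_mul_cancel₀ hP, one_mul] at this
  rw [this, show q - star s = -(star s - q) from (neg_sub _ _).symm, mul_neg, neg_neg]
end

section
/- If f : U → ℍ is a C³ slice hyperholomorphic function on an open set U ⊂ ℍ, then D̄f is polyanalytic of order 2, i.e., D²(D̄ f) = 0, where D is the Cauchy-Fueter operator and D̄ its conjugate. -/
open scoped Quaternion

/-- Directional derivative of `f : ℍ → ℍ` in the direction `a`. -/
noncomputable def pd (a : ℍ[ℝ]) (f : ℍ[ℝ] → ℍ[ℝ]) : ℍ[ℝ] → ℍ[ℝ] :=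
  fun q => fderiv ℝ f q a

def e1 : ℍ[ℝ] := ⟨0, 1, 0, 0⟩
def e2 : ℍ[ℝ] := ⟨0, 0, 1, 0⟩
def e3 : ℍ[ℝ] := ⟨0, 0, 0, 1⟩

/-- The Cauchy-Fueter operator `D = ∂_{q₀} + e₁∂_{q₁} + e₂∂_{q₂} + e₃∂_{q₃}`. -/
noncomputable def Dop (f : ℍ[ℝ] → ℍ[ℝ]) : ℍ[ℝ] → ℍ[ℝ] :=
  fun q => pd 1 f q + e1 * pd e1 f q + e2 * pd e2 f q + e3 * pd e3 f q

/-- The conjugate Cauchy-Fueter operator. -/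
noncomputable def DbarOp (f : ℍ[ℝ] → ℍ[ℝ]) : ℍ[ℝ] → ℍ[ℝ] :=
  fun q => pd 1 f q - e1 * pd e1 f q - e2 * pd e2 f q - e3 * pd e3 f q

/-- The Laplacian in four real variables. -/
noncomputable def Lap (f : ℍ[ℝ] → ℍ[ℝ]) : ℍ[ℝ] → ℍ[ℝ] :=
  fun q => pd 1 (pd 1 f) q + pd e1 (pd e1 f) q + pd e2 (pd e2 f) q + pd e3 (pd e3 f) q

/-- Left slice hyperholomorphic function on `U`. -/
def IsSliceHyp (U : Set ℍ[ℝ]) (f : ℍ[ℝ] → ℍ[ℝ]) : Prop :=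
  ∃ α β : ℝ → ℝ → ℍ[ℝ],
    (∀ u v : ℝ, α u (-v) = α u v ∧ β u (-v) = -β u v) ∧
    (∀ u v : ℝ,
      HasDerivAt (fun u' => α u' v) (deriv (fun v' => β u v') v) u ∧
      HasDerivAt (fun u' => β u' v) (-(deriv (fun v' => α u v') v)) u) ∧
    (∀ q ∈ U, ∀ J : ℍ[ℝ], J.re = 0 → ‖J‖ = 1 → ∀ u v : ℝ,
      q = (u : ℍ[ℝ]) + v • J → f q = α u v + J * β u v)
set_option linter.unusedVariables false
set_option synthInstance.maxHeartbeats 100000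

noncomputable section

namespace QSlice
open Topology Filter

/-- re as a continuous linear map -/
def qre : ℍ[ℝ] →L[ℝ] ℝ :=
  LinearMap.toContinuousLinearMap
    { toFun := fun x => x.re
      map_add' := fun a b => rfl
      map_smul' := fun r a => rfl }

def qimI : ℍ[ℝ] →L[ℝ] ℝ :=
  LinearMap.toContinuousLinearMap
    { toFun := fun x => x.imI
      map_add' := fun a b => rfl
      map_smul' := fun r a => rfl }

def qimJ : ℍ[ℝ] →L[ℝ] ℝ :=
  LinearMap.toContinuousLinearMap
    { toFun := fun x => x.imJ
      map_add' := fun a b => rfl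
      map_smul' := fun r a => rfl }

def qimK : ℍ[ℝ] →L[ℝ] ℝ :=
  LinearMap.toContinuousLinearMap
    { toFun := fun x => x.imK
      map_add' := fun a b => rfl
      map_smul' := fun r a => rfl }

def qim : ℍ[ℝ] →L[ℝ] ℍ[ℝ] :=
  LinearMap.toContinuousLinearMap
    { toFun := fun x => x.im
      map_add' := fun a b => by ext <;> simp
      map_smul' := fun r a => by ext <;> simp }

@[simp] lemma qre_apply (x : ℍ[ℝ]) : qre x = x.re := rfl
@[simp] lemma qimI_apply (x : ℍ[ℝ]) : qimI x = x.imI := rfl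
@[simp] lemma qimJ_apply (x : ℍ[ℝ]) : qimJ x = x.imJ := rfl
@[simp] lemma qimK_apply (x : ℍ[ℝ]) : qimK x = x.imK := rfl
@[simp] lemma qim_apply (x : ℍ[ℝ]) : qim x = x.im := rfl

@[simp] lemma e1_re : e1.re = 0 := rfl
@[simp] lemma e1_imI : e1.imI = 1 := rfl
@[simp] lemma e1_imJ : e1.imJ = 0 := rfl
@[simp] lemma e1_imK : e1.imK = 0 := rfl
@[simp] lemma e2_re : e2.re = 0 := rfl
@[simp] lemma e2_imI : e2.imI = 0 := rfl
@[simp] lemma e2_imJ : e2.imJ = 1 := rfl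
@[simp] lemma e2_imK : e2.imK = 0 := rfl
@[simp] lemma e3_re : e3.re = 0 := rfl
@[simp] lemma e3_imI : e3.imI = 0 := rfl
@[simp] lemma e3_imJ : e3.imJ = 0 := rfl
@[simp] lemma e3_imK : e3.imK = 1 := rfl
@[simp] lemma one_re' : (1 : ℍ[ℝ]).re = 1 := rfl
@[simp] lemma one_imI' : (1 : ℍ[ℝ]).imI = 0 := rfl
@[simp] lemma one_imJ' : (1 : ℍ[ℝ]).imJ = 0 := rfl
@[simp] lemma one_imK' : (1 : ℍ[ℝ]).imK = 0 := rfl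

@[simp] lemma e1_im : e1.im = e1 := by ext <;> simp
@[simp] lemma norm_e1 : ‖e1‖ = 1 := by
  rw [norm_eq_sqrt_real_inner, Quaternion.inner_self]
  norm_num [Quaternion.normSq_def']

lemma e1_mul_e1 : e1 * e1 = -1 := by ext <;> simp
lemma e2_mul_e2 : e2 * e2 = -1 := by ext <;> simp
lemma e3_mul_e3 : e3 * e3 = -1 := by ext <;> simp

lemma im_decomp (q : ℍ[ℝ]) : q.imI • e1 + q.imJ • e2 + q.imK • e3 = q.im := by
  ext <;> simp

lemma im_mul_self {y : ℍ[ℝ]} (hy : y.re = 0) : y * y = ((-(‖y‖^2) : ℝ) : ℍ[ℝ]) := by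
  have hn : ‖y‖^2 = Quaternion.normSq y := by
    rw [sq, ← Quaternion.normSq_eq_norm_mul_self]
  rw [hn]
  ext <;> simp [Quaternion.normSq_def', hy, ← Quaternion.coe_pow] <;> ring

/-! ### Chain rule machinery -/

def Sfun (g : ℝ × ℝ → ℍ[ℝ]) : ℍ[ℝ] → ℍ[ℝ] := fun x => g (x.re, ‖x.im‖)

def Tfun (g : ℝ × ℝ → ℍ[ℝ]) : ℍ[ℝ] → ℍ[ℝ] := fun x => x.im * g (x.re, ‖x.im‖)

def Pm (q : ℍ[ℝ]) : ℝ × ℝ := (q.re, ‖q.im‖)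

def pu (g : ℝ × ℝ → ℍ[ℝ]) : ℝ × ℝ → ℍ[ℝ] := fun p => fderiv ℝ g p (1, 0)

def pv (g : ℝ × ℝ → ℍ[ℝ]) : ℝ × ℝ → ℍ[ℝ] := fun p => fderiv ℝ g p (0, 1)

def Hmap (q : ℍ[ℝ]) : ℍ[ℝ] →L[ℝ] ℝ × ℝ :=
  qre.prod ((‖q.im‖⁻¹ * q.imI) • qimI + (‖q.im‖⁻¹ * q.imJ) • qimJ + (‖q.im‖⁻¹ * q.imK) • qimK)

lemma hasFDerivAt_normim {q : ℍ[ℝ]} (hq : q.im ≠ 0) :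
    HasFDerivAt (fun x : ℍ[ℝ] => ‖x.im‖)
      ((‖q.im‖⁻¹ * q.imI) • qimI + (‖q.im‖⁻¹ * q.imJ) • qimJ + (‖q.im‖⁻¹ * q.imK) • qimK) q := by
  have hr : ‖q.im‖ ≠ 0 := norm_ne_zero_iff.2 hq
  set φ : ℍ[ℝ] → ℝ := fun x => x.imI * x.imI + (x.imJ * x.imJ + x.imK * x.imK) with hφ
  have key : ∀ x : ℍ[ℝ], ‖x.im‖ = Real.sqrt (φ x) := by
    intro x
    rw [norm_eq_sqrt_real_inner, Quaternion.inner_self]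
    congr 1
    simp [hφ, Quaternion.normSq_def']
    ring
  have hφq : φ q = ‖q.im‖ * ‖q.im‖ := by
    rw [← Quaternion.normSq_eq_norm_mul_self]
    simp [hφ, Quaternion.normSq_def']
    ring
  have hne : φ q ≠ 0 := by rw [hφq]; exact mul_ne_zero hr hr
  have h1 : HasFDerivAt φ
      ((q.imI • qimI + q.imI • qimI) +
        ((q.imJ • qimJ + q.imJ • qimJ) + (q.imK • qimK + q.imK • qimK))) q := by
    exact ((qimI.hasFDerivAt.mul qimI.hasFDerivAt).add
      ((qimJ.hasFDerivAt.mul qimJ.hasFDerivAt).add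
        (qimK.hasFDerivAt.mul qimK.hasFDerivAt)))
  have h2 := (Real.hasDerivAt_sqrt hne).comp_hasFDerivAt q h1
  have hfe : (fun x : ℍ[ℝ] => Real.sqrt (φ x)) = fun x : ℍ[ℝ] => ‖x.im‖ := by
    funext x; rw [key]
  rw [show ((fun x => √x) ∘ φ) = fun x : ℍ[ℝ] => ‖x.im‖ from by
    funext x; simp [Function.comp]; rw [key]] at h2
  have hs : Real.sqrt (φ q) = ‖q.im‖ := (key q).symm
  refine h2.congr_fderiv ?_
  ext a
  simp [hs]
  field_simp
  ring
lemma hasFDerivAt_Pm {q : ℍ[ℝ]} (hq : q.im ≠ 0) :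
    HasFDerivAt (fun x : ℍ[ℝ] => (x.re, ‖x.im‖)) (Hmap q) q :=
  qre.hasFDerivAt.prodMk (hasFDerivAt_normim hq)

lemma Hmap_one (q : ℍ[ℝ]) : Hmap q 1 = (1, 0) := by
  simp [Hmap]

lemma Hmap_e1 (q : ℍ[ℝ]) : Hmap q e1 = (0, ‖q.im‖⁻¹ * q.imI) := by
  simp [Hmap]

lemma Hmap_e2 (q : ℍ[ℝ]) : Hmap q e2 = (0, ‖q.im‖⁻¹ * q.imJ) := by
  simp [Hmap]

lemma Hmap_e3 (q : ℍ[ℝ]) : Hmap q e3 = (0, ‖q.im‖⁻¹ * q.imK) := by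
  simp [Hmap]

variable {g : ℝ × ℝ → ℍ[ℝ]} {q : ℍ[ℝ]}

lemma hasFDerivAt_Sfun (hq : q.im ≠ 0) (hg : DifferentiableAt ℝ g (Pm q)) :
    HasFDerivAt (Sfun g) ((fderiv ℝ g (Pm q)).comp (Hmap q)) q :=
  hg.hasFDerivAt.comp q (hasFDerivAt_Pm hq)

lemma differentiableAt_Sfun (hq : q.im ≠ 0) (hg : DifferentiableAt ℝ g (Pm q)) :
    DifferentiableAt ℝ (Sfun g) q :=
  (hasFDerivAt_Sfun hq hg).differentiableAt

lemma pd_Sfun (hq : q.im ≠ 0) (hg : DifferentiableAt ℝ g (Pm q)) (a : ℍ[ℝ]) :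
    pd a (Sfun g) q = fderiv ℝ g (Pm q) (Hmap q a) := by
  show fderiv ℝ (Sfun g) q a = _
  rw [(hasFDerivAt_Sfun hq hg).fderiv]
  rfl

lemma pd_Sfun_one (hq : q.im ≠ 0) (hg : DifferentiableAt ℝ g (Pm q)) :
    pd 1 (Sfun g) q = pu g (Pm q) := by
  rw [pd_Sfun hq hg, Hmap_one]; rfl

lemma pair_eq_smul (c : ℝ) : ((0 : ℝ), c) = c • ((0 : ℝ), (1 : ℝ)) := by simp

lemma pd_Sfun_e1 (hq : q.im ≠ 0) (hg : DifferentiableAt ℝ g (Pm q)) :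
    pd e1 (Sfun g) q = (‖q.im‖⁻¹ * q.imI) • pv g (Pm q) := by
  rw [pd_Sfun hq hg, Hmap_e1, pair_eq_smul, map_smul]; rfl

lemma pd_Sfun_e2 (hq : q.im ≠ 0) (hg : DifferentiableAt ℝ g (Pm q)) :
    pd e2 (Sfun g) q = (‖q.im‖⁻¹ * q.imJ) • pv g (Pm q) := by
  rw [pd_Sfun hq hg, Hmap_e2, pair_eq_smul, map_smul]; rfl

lemma pd_Sfun_e3 (hq : q.im ≠ 0) (hg : DifferentiableAt ℝ g (Pm q)) :
    pd e3 (Sfun g) q = (‖q.im‖⁻¹ * q.imK) • pv g (Pm q) := by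
  rw [pd_Sfun hq hg, Hmap_e3, pair_eq_smul, map_smul]; rfl

lemma hasFDerivAt_Tfun (hq : q.im ≠ 0) (hg : DifferentiableAt ℝ g (Pm q)) :
    HasFDerivAt (Tfun g)
      (q.im • ((fderiv ℝ g (Pm q)).comp (Hmap q)) + qim.smulRight (g (Pm q))) q := by
  have := (qim.hasFDerivAt (x := q)).mul' (hasFDerivAt_Sfun hq hg)
  have h2 : HasFDerivAt (Tfun g)
      (q.im • ((fderiv ℝ g (Pm q)).comp (Hmap q)) + MulOpposite.op (g (Pm q)) • qim) q := this
  refine h2.congr_fderiv ?_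
  ext a <;> simp

lemma differentiableAt_Tfun (hq : q.im ≠ 0) (hg : DifferentiableAt ℝ g (Pm q)) :
    DifferentiableAt ℝ (Tfun g) q :=
  (hasFDerivAt_Tfun hq hg).differentiableAt

lemma pd_Tfun (hq : q.im ≠ 0) (hg : DifferentiableAt ℝ g (Pm q)) (a : ℍ[ℝ]) :
    pd a (Tfun g) q = q.im * (fderiv ℝ g (Pm q) (Hmap q a)) + a.im * g (Pm q) := by
  show fderiv ℝ (Tfun g) q a = _
  rw [(hasFDerivAt_Tfun hq hg).fderiv]
  simp [ContinuousLinearMap.smul_apply, ContinuousLinearMap.smulRight_apply]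

lemma pd_Tfun_one (hq : q.im ≠ 0) (hg : DifferentiableAt ℝ g (Pm q)) :
    pd 1 (Tfun g) q = q.im * pu g (Pm q) := by
  rw [pd_Tfun hq hg, Hmap_one]
  simp [pu]

lemma pd_Tfun_e1 (hq : q.im ≠ 0) (hg : DifferentiableAt ℝ g (Pm q)) :
    pd e1 (Tfun g) q = q.im * ((‖q.im‖⁻¹ * q.imI) • pv g (Pm q)) + e1 * g (Pm q) := by
  rw [pd_Tfun hq hg, Hmap_e1, pair_eq_smul, map_smul, e1_im]; rfl

lemma pd_Tfun_e2 (hq : q.im ≠ 0) (hg : DifferentiableAt ℝ g (Pm q)) :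
    pd e2 (Tfun g) q = q.im * ((‖q.im‖⁻¹ * q.imJ) • pv g (Pm q)) + e2 * g (Pm q) := by
  rw [pd_Tfun hq hg, Hmap_e2, pair_eq_smul, map_smul]
  rw [show e2.im = e2 from by ext <;> simp]; rfl

lemma pd_Tfun_e3 (hq : q.im ≠ 0) (hg : DifferentiableAt ℝ g (Pm q)) :
    pd e3 (Tfun g) q = q.im * ((‖q.im‖⁻¹ * q.imK) • pv g (Pm q)) + e3 * g (Pm q) := by
  rw [pd_Tfun hq hg, Hmap_e3, pair_eq_smul, map_smul]
  rw [show e3.im = e3 from by ext <;> simp]; rfl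

lemma sum_smul_e_mul (q : ℍ[ℝ]) (Z : ℍ[ℝ]) :
    q.imI • (e1 * Z) + q.imJ • (e2 * Z) + q.imK • (e3 * Z) = q.im * Z := by
  rw [← im_decomp q]
  simp [add_mul, smul_mul_assoc]

lemma Dop_Sfun (hq : q.im ≠ 0) (hg : DifferentiableAt ℝ g (Pm q)) :
    Dop (Sfun g) q = pu g (Pm q) + ‖q.im‖⁻¹ • (q.im * pv g (Pm q)) := by
  unfold Dop
  rw [pd_Sfun_one hq hg, pd_Sfun_e1 hq hg, pd_Sfun_e2 hq hg, pd_Sfun_e3 hq hg,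
    ← sum_smul_e_mul q (pv g (Pm q))]
  simp only [mul_smul_comm, smul_smul, smul_add]
  module

lemma Dbar_Sfun (hq : q.im ≠ 0) (hg : DifferentiableAt ℝ g (Pm q)) :
    DbarOp (Sfun g) q = pu g (Pm q) - ‖q.im‖⁻¹ • (q.im * pv g (Pm q)) := by
  unfold DbarOp
  rw [pd_Sfun_one hq hg, pd_Sfun_e1 hq hg, pd_Sfun_e2 hq hg, pd_Sfun_e3 hq hg,
    ← sum_smul_e_mul q (pv g (Pm q))]
  simp only [mul_smul_comm, smul_smul, smul_add]
  module

private lemma regroup (X G T1 T2 T3 W : ℍ[ℝ]) (h : T1 + T2 + T3 = -W) :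
    X + (T1 + -G) + (T2 + -G) + (T3 + -G)
      = X - (3 : ℝ) • G - W := by
  have h3 : T3 = -W - T1 - T2 := by rw [← h]; abel
  subst h3
  module

private lemma regroup' (X G T1 T2 T3 W : ℍ[ℝ]) (h : T1 + T2 + T3 = -W) :
    X - (T1 + -G) - (T2 + -G) - (T3 + -G)
      = X + (3 : ℝ) • G + W := by
  have h3 : T3 = -W - T1 - T2 := by rw [← h]; abel
  subst h3
  module

lemma sum_h2 (hq : q.im ≠ 0) (Y : ℍ[ℝ]) :
    (‖q.im‖⁻¹ * q.imI) • (e1 * (q.im * Y)) + (‖q.im‖⁻¹ * q.imJ) • (e2 * (q.im * Y)) +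
      (‖q.im‖⁻¹ * q.imK) • (e3 * (q.im * Y)) = -(‖q.im‖ • Y) := by
  have hr : ‖q.im‖ ≠ 0 := norm_ne_zero_iff.2 hq
  have h1 : q.imI • (e1 * (q.im * Y)) + q.imJ • (e2 * (q.im * Y)) + q.imK • (e3 * (q.im * Y))
      = (-(‖q.im‖ ^ 2)) • Y := by
    rw [sum_smul_e_mul q (q.im * Y), ← mul_assoc,
      im_mul_self (Quaternion.re_im (a := q)), Quaternion.coe_mul_eq_smul]
  have h2 := congrArg (fun z : ℍ[ℝ] => ‖q.im‖⁻¹ • z) h1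
  simp only [smul_add, smul_smul] at h2
  rw [h2, show ‖q.im‖⁻¹ * -(‖q.im‖ ^ 2) = -‖q.im‖ by field_simp, neg_smul]

lemma key_expand (q : ℍ[ℝ]) (Y G E : ℍ[ℝ]) (c : ℝ) :
    E * (q.im * (c • Y) + E * G) = c • (E * (q.im * Y)) + (E * E) * G := by
  simp only [mul_add, mul_smul_comm, mul_assoc]

lemma Dop_Tfun (hq : q.im ≠ 0) (hg : DifferentiableAt ℝ g (Pm q)) :
    Dop (Tfun g) q = q.im * pu g (Pm q) - (3 : ℝ) • g (Pm q) - ‖q.im‖ • pv g (Pm q) := by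
  unfold Dop
  rw [pd_Tfun_one hq hg, pd_Tfun_e1 hq hg, pd_Tfun_e2 hq hg, pd_Tfun_e3 hq hg,
    key_expand, key_expand, key_expand, e1_mul_e1, e2_mul_e2, e3_mul_e3]
  simp only [neg_one_mul]
  exact regroup _ _ _ _ _ _ (sum_h2 hq _)

lemma Dbar_Tfun (hq : q.im ≠ 0) (hg : DifferentiableAt ℝ g (Pm q)) :
    DbarOp (Tfun g) q = q.im * pu g (Pm q) + (3 : ℝ) • g (Pm q) + ‖q.im‖ • pv g (Pm q) := by
  unfold DbarOp
  rw [pd_Tfun_one hq hg, pd_Tfun_e1 hq hg, pd_Tfun_e2 hq hg, pd_Tfun_e3 hq hg,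
    key_expand, key_expand, key_expand, e1_mul_e1, e2_mul_e2, e3_mul_e3]
  simp only [neg_one_mul]
  exact regroup' _ _ _ _ _ _ (sum_h2 hq _)

/-! ### Slice decomposition -/

def Wset (U : Set ℍ[ℝ]) : Set (ℝ × ℝ) := {p | 0 < p.2 ∧ ((p.1 : ℍ[ℝ]) + p.2 • e1) ∈ U}

def Afun (f : ℍ[ℝ] → ℍ[ℝ]) : ℝ × ℝ → ℍ[ℝ] :=
  fun p => (2⁻¹ : ℝ) • (f ((p.1 : ℍ[ℝ]) + p.2 • e1) + f ((p.1 : ℍ[ℝ]) + p.2 • -e1))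

def Bfun (f : ℍ[ℝ] → ℍ[ℝ]) : ℝ × ℝ → ℍ[ℝ] :=
  fun p => (2⁻¹ : ℝ) • (e1 * (f ((p.1 : ℍ[ℝ]) + p.2 • -e1) - f ((p.1 : ℍ[ℝ]) + p.2 • e1)))

def Btf (f : ℍ[ℝ] → ℍ[ℝ]) : ℝ × ℝ → ℍ[ℝ] := fun p => p.2⁻¹ • Bfun f p

variable {U : Set ℍ[ℝ]} {f : ℍ[ℝ] → ℍ[ℝ]} {α β : ℝ → ℝ → ℍ[ℝ]} {p : ℝ × ℝ}

lemma isOpen_Wset (hU : IsOpen U) : IsOpen (Wset U) := by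
  have h2 : Continuous (fun p : ℝ × ℝ => (p.1 : ℍ[ℝ]) + p.2 • e1) :=
    (Quaternion.continuous_coe.comp continuous_fst).add (continuous_snd.smul continuous_const)
  exact (isOpen_lt continuous_const continuous_snd).inter (hU.preimage h2)

lemma im_eq_self {J : ℍ[ℝ]} (hJ : J.re = 0) : J.im = J := by ext <;> simp [hJ]

lemma pt_re (u v : ℝ) {J : ℍ[ℝ]} (hJ : J.re = 0) : ((u : ℍ[ℝ]) + v • J).re = u := by
  simp [hJ]

lemma pt_im (u v : ℝ) {J : ℍ[ℝ]} (hJ : J.re = 0) : ((u : ℍ[ℝ]) + v • J).im = v • J := by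
  ext <;> simp [hJ]

lemma pt_norm (u : ℝ) {v : ℝ} {J : ℍ[ℝ]} (hJ : J.re = 0) (hJn : ‖J‖ = 1) (hv : 0 ≤ v) :
    ‖((u : ℍ[ℝ]) + v • J).im‖ = v := by
  rw [pt_im u v hJ, norm_smul, hJn, mul_one, Real.norm_eq_abs, abs_of_nonneg hv]

lemma neg_e1_re : (-e1).re = 0 := by simp
lemma norm_neg_e1 : ‖-e1‖ = 1 := by rw [norm_neg, norm_e1]

section
variable (hax : ∀ q ∈ U, ∀ J : ℍ[ℝ], J.re = 0 → ‖J‖ = 1 →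
    (q.re : ℍ[ℝ]) + ‖q.im‖ • J ∈ U)

include hax

lemma mem_slice_of_W (hp : p ∈ Wset U) (J : ℍ[ℝ]) (hJ : J.re = 0) (hJn : ‖J‖ = 1) :
    ((p.1 : ℍ[ℝ]) + p.2 • J) ∈ U := by
  have h := hax _ hp.2 J hJ hJn
  rwa [pt_re p.1 p.2 (by simp : e1.re = 0), pt_norm p.1 (by simp : e1.re = 0) norm_e1 hp.1.le]
    at h

lemma mem_neg_slice (hp : p ∈ Wset U) : ((p.1 : ℍ[ℝ]) + p.2 • -e1) ∈ U :=
  mem_slice_of_W hax hp (-e1) neg_e1_re norm_neg_e1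

end

section
variable (hrep : ∀ q ∈ U, ∀ J : ℍ[ℝ], J.re = 0 → ‖J‖ = 1 → ∀ u v : ℝ,
    q = (u : ℍ[ℝ]) + v • J → f q = α u v + J * β u v)
  (hax : ∀ q ∈ U, ∀ J : ℍ[ℝ], J.re = 0 → ‖J‖ = 1 → (q.re : ℍ[ℝ]) + ‖q.im‖ • J ∈ U)

include hrep hax

lemma A_eq (hp : p ∈ Wset U) : Afun f p = α p.1 p.2 := by
  have hP := hrep _ hp.2 e1 rfl norm_e1 p.1 p.2 rfl
  have hM := hrep _ (mem_neg_slice hax hp) (-e1) neg_e1_re norm_neg_e1 p.1 p.2 rfl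
  unfold Afun
  rw [hP, hM]
  simp only [neg_mul]
  module

lemma B_eq (hp : p ∈ Wset U) : Bfun f p = β p.1 p.2 := by
  have hP := hrep _ hp.2 e1 rfl norm_e1 p.1 p.2 rfl
  have hM := hrep _ (mem_neg_slice hax hp) (-e1) neg_e1_re norm_neg_e1 p.1 p.2 rfl
  unfold Bfun
  rw [hP, hM]
  have hc : (α p.1 p.2 + -e1 * β p.1 p.2) - (α p.1 p.2 + e1 * β p.1 p.2)
      = -(e1 * β p.1 p.2) - e1 * β p.1 p.2 := by
    simp only [neg_mul]; abel
  rw [hc, mul_sub, mul_neg, ← mul_assoc, e1_mul_e1, neg_one_mul, neg_neg]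
  module

/-- Representation of `f` off the real axis. -/
lemma f_eq_ST {x : ℍ[ℝ]} (hx : x ∈ U) (hxim : x.im ≠ 0) :
    f x = Sfun (Afun f) x + Tfun (Btf f) x := by
  have hr : (0:ℝ) < ‖x.im‖ := norm_pos_iff.2 hxim
  set J : ℍ[ℝ] := ‖x.im‖⁻¹ • x.im with hJ
  have hJre : J.re = 0 := by simp [hJ]
  have hJn : ‖J‖ = 1 := by
    rw [hJ, norm_smul, Real.norm_eq_abs, abs_of_nonneg (inv_nonneg.2 hr.le)]
    field_simp
  have hxe : x = (x.re : ℍ[ℝ]) + ‖x.im‖ • J := by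
    rw [hJ, smul_smul, mul_inv_cancel₀ hr.ne', one_smul, Quaternion.re_add_im]
  have hp : (x.re, ‖x.im‖) ∈ Wset U := by
    constructor
    · exact hr
    · exact hax _ hx e1 rfl norm_e1
  have h := hrep _ hx J hJre hJn x.re ‖x.im‖ hxe
  show f x = Afun f (x.re, ‖x.im‖) + x.im * Btf f (x.re, ‖x.im‖)
  have hA := A_eq hrep hax hp
  have hB := B_eq hrep hax hp
  show f x = Afun f (x.re, ‖x.im‖) + x.im * ((‖x.im‖⁻¹ : ℝ) • Bfun f (x.re, ‖x.im‖))
  rw [hA, hB]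
  show f x = α x.re ‖x.im‖ + x.im * (‖x.im‖⁻¹ • β x.re ‖x.im‖)
  rw [h, hJ, smul_mul_assoc, mul_smul_comm]

end

/-! ### Smoothness of the slice components -/

section Smooth
variable (hU : IsOpen U)
  (hax : ∀ q ∈ U, ∀ J : ℍ[ℝ], J.re = 0 → ‖J‖ = 1 → (q.re : ℍ[ℝ]) + ‖q.im‖ • J ∈ U)
  (hf : ContDiffOn ℝ 3 f U)

lemma contDiff_LJ (J : ℍ[ℝ]) : ContDiff ℝ 3 (fun p : ℝ × ℝ => (p.1 : ℍ[ℝ]) + p.2 • J) := by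
  have h : ContDiff ℝ 3 (fun p : ℝ × ℝ => p.1 • (1 : ℍ[ℝ]) + p.2 • J) :=
    (contDiff_fst.smul contDiff_const).add (contDiff_snd.smul contDiff_const)
  convert h using 2 with p
  rw [show (1 : ℍ[ℝ]) = ((1 : ℝ) : ℍ[ℝ]) from rfl, Quaternion.smul_coe, mul_one]

include hax hf

lemma contDiffOn_fLJ (J : ℍ[ℝ]) (hJ : J.re = 0) (hJn : ‖J‖ = 1) :
    ContDiffOn ℝ 3 (fun p : ℝ × ℝ => f ((p.1 : ℍ[ℝ]) + p.2 • J)) (Wset U) := by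
  apply hf.comp (contDiff_LJ J).contDiffOn
  intro p hp
  exact mem_slice_of_W hax hp J hJ hJn

lemma contDiffOn_Afun : ContDiffOn ℝ 3 (Afun f) (Wset U) :=
  ((contDiffOn_fLJ hax hf e1 rfl norm_e1).add
    (contDiffOn_fLJ hax hf (-e1) neg_e1_re norm_neg_e1)).const_smul _

lemma contDiffOn_Bfun : ContDiffOn ℝ 3 (Bfun f) (Wset U) :=
  ((contDiffOn_const.mul
    ((contDiffOn_fLJ hax hf (-e1) neg_e1_re norm_neg_e1).sub
      (contDiffOn_fLJ hax hf e1 rfl norm_e1)))).const_smul _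

lemma contDiffOn_Btf : ContDiffOn ℝ 3 (Btf f) (Wset U) := by
  apply ContDiffOn.smul (f := fun p : ℝ × ℝ => p.2⁻¹) _ (contDiffOn_Bfun hax hf)
  exact (contDiffOn_snd.inv (fun p hp => hp.1.ne'))

end Smooth

/-- local `ContDiffAt` from `ContDiffOn` on an open set. -/
lemma cdAt {n : ℕ∞} {φ : ℝ × ℝ → ℍ[ℝ]} {s : Set (ℝ × ℝ)}
    (h : ContDiffOn ℝ n φ s) (hs : IsOpen s) (hp : p ∈ s) : ContDiffAt ℝ n φ p :=
  (h p hp).contDiffAt (hs.mem_nhds hp)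

lemma contDiffAt_pu {n : ℕ} {φ : ℝ × ℝ → ℍ[ℝ]} (h : ContDiffAt ℝ (n + 1) φ p) :
    ContDiffAt ℝ n (pu φ) p := by
  have h1 : ContDiffAt ℝ n (fderiv ℝ φ) p := by
    apply h.fderiv_right
    norm_cast
  exact h1.clm_apply contDiffAt_const

lemma contDiffAt_pv {n : ℕ} {φ : ℝ × ℝ → ℍ[ℝ]} (h : ContDiffAt ℝ (n + 1) φ p) :
    ContDiffAt ℝ n (pv φ) p := by
  have h1 : ContDiffAt ℝ n (fderiv ℝ φ) p := by
    apply h.fderiv_right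
    norm_cast
  exact h1.clm_apply contDiffAt_const

/-- symmetry of second derivatives -/
lemma pu_pv_symm {φ : ℝ × ℝ → ℍ[ℝ]} (h : ContDiffAt ℝ 2 φ p) :
    pu (pv φ) p = pv (pu φ) p := by
  have hd : DifferentiableAt ℝ (fderiv ℝ φ) p := by
    have h1 : ContDiffAt ℝ 1 (fderiv ℝ φ) p := h.fderiv_right (by norm_cast)
    exact h1.differentiableAt (by norm_num)
  have hsym := h.isSymmSndFDerivAt (by norm_num)
  have e1' : pu (pv φ) p = fderiv ℝ (fderiv ℝ φ) p (1, 0) (0, 1) := by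
    show fderiv ℝ (fun y => fderiv ℝ φ y (0, 1)) p (1, 0) = _
    rw [fderiv_clm_apply hd (differentiableAt_const _)]
    simp
  have e2' : pv (pu φ) p = fderiv ℝ (fderiv ℝ φ) p (0, 1) (1, 0) := by
    show fderiv ℝ (fun y => fderiv ℝ φ y (1, 0)) p (0, 1) = _
    rw [fderiv_clm_apply hd (differentiableAt_const _)]
    simp
  rw [e1', e2', hsym]

/-! ### Transfer of the Cauchy-Riemann relations -/

lemma curve_v_hasDerivAt {φ : ℝ × ℝ → ℍ[ℝ]} (hd : DifferentiableAt ℝ φ p) :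
    HasDerivAt (fun v' => φ (p.1, v')) (pv φ p) p.2 := by
  have hc : HasDerivAt (fun v' : ℝ => ((p.1 : ℝ), v')) ((0 : ℝ), (1 : ℝ)) p.2 :=
    (hasDerivAt_const _ _).prodMk (hasDerivAt_id _)
  exact hd.hasFDerivAt.comp_hasDerivAt p.2 hc

lemma curve_u_hasDerivAt {φ : ℝ × ℝ → ℍ[ℝ]} (hd : DifferentiableAt ℝ φ p) :
    HasDerivAt (fun u' => φ (u', p.2)) (pu φ p) p.1 := by
  have hc : HasDerivAt (fun u' : ℝ => (u', (p.2 : ℝ))) ((1 : ℝ), (0 : ℝ)) p.1 :=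
    (hasDerivAt_id _).prodMk (hasDerivAt_const _ _)
  exact hd.hasFDerivAt.comp_hasDerivAt p.1 hc

section CR
variable (hU : IsOpen U)
  (hax : ∀ q ∈ U, ∀ J : ℍ[ℝ], J.re = 0 → ‖J‖ = 1 → (q.re : ℍ[ℝ]) + ‖q.im‖ • J ∈ U)
  (hf : ContDiffOn ℝ 3 f U)
  (hCR : ∀ u v : ℝ,
      HasDerivAt (fun u' => α u' v) (deriv (fun v' => β u v') v) u ∧
      HasDerivAt (fun u' => β u' v) (-(deriv (fun v' => α u v') v)) u)
  (hrep : ∀ q ∈ U, ∀ J : ℍ[ℝ], J.re = 0 → ‖J‖ = 1 → ∀ u v : ℝ,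
      q = (u : ℍ[ℝ]) + v • J → f q = α u v + J * β u v)

include hU hax hf hCR hrep

lemma CR_A (hp : p ∈ Wset U) : pu (Afun f) p = pv (Bfun f) p := by
  have hWo := isOpen_Wset (U := U) hU
  have hAd : DifferentiableAt ℝ (Afun f) p :=
    (cdAt (contDiffOn_Afun hax hf) hWo hp).differentiableAt (by norm_num)
  have hBd : DifferentiableAt ℝ (Bfun f) p :=
    (cdAt (contDiffOn_Bfun hax hf) hWo hp).differentiableAt (by norm_num)
  have hvmem : ∀ᶠ v' in 𝓝 p.2, ((p.1 : ℝ), v') ∈ Wset U :=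
    ((continuous_const.prodMk continuous_id).continuousAt).preimage_mem_nhds
      (hWo.mem_nhds (by simpa using hp))
  have humem : ∀ᶠ u' in 𝓝 p.1, ((u' : ℝ), p.2) ∈ Wset U :=
    ((continuous_id.prodMk continuous_const).continuousAt).preimage_mem_nhds
      (hWo.mem_nhds (by simpa using hp))
  have hβB : (fun v' => β p.1 v') =ᶠ[𝓝 p.2] (fun v' => Bfun f (p.1, v')) := by
    filter_upwards [hvmem] with v' hv'
    exact (B_eq hrep hax hv').symm
  have hderiv : deriv (fun v' => β p.1 v') p.2 = pv (Bfun f) p := by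
    rw [hβB.deriv_eq]
    exact (curve_v_hasDerivAt hBd).deriv
  have h1 : HasDerivAt (fun u' => α u' p.2) (pv (Bfun f) p) p.1 := by
    have h := (hCR p.1 p.2).1
    rwa [hderiv] at h
  have hαA : (fun u' => α u' p.2) =ᶠ[𝓝 p.1] (fun u' => Afun f (u', p.2)) := by
    filter_upwards [humem] with u' hu'
    exact (A_eq hrep hax hu').symm
  have h2 : HasDerivAt (fun u' => α u' p.2) (pu (Afun f) p) p.1 :=
    (curve_u_hasDerivAt hAd).congr_of_eventuallyEq hαA
  exact h2.unique h1

lemma CR_B (hp : p ∈ Wset U) : pu (Bfun f) p = -(pv (Afun f) p) := by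
  have hWo := isOpen_Wset (U := U) hU
  have hAd : DifferentiableAt ℝ (Afun f) p :=
    (cdAt (contDiffOn_Afun hax hf) hWo hp).differentiableAt (by norm_num)
  have hBd : DifferentiableAt ℝ (Bfun f) p :=
    (cdAt (contDiffOn_Bfun hax hf) hWo hp).differentiableAt (by norm_num)
  have hvmem : ∀ᶠ v' in 𝓝 p.2, ((p.1 : ℝ), v') ∈ Wset U :=
    ((continuous_const.prodMk continuous_id).continuousAt).preimage_mem_nhds
      (hWo.mem_nhds (by simpa using hp))
  have humem : ∀ᶠ u' in 𝓝 p.1, ((u' : ℝ), p.2) ∈ Wset U :=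
    ((continuous_id.prodMk continuous_const).continuousAt).preimage_mem_nhds
      (hWo.mem_nhds (by simpa using hp))
  have hαA : (fun v' => α p.1 v') =ᶠ[𝓝 p.2] (fun v' => Afun f (p.1, v')) := by
    filter_upwards [hvmem] with v' hv'
    exact (A_eq hrep hax hv').symm
  have hderiv : deriv (fun v' => α p.1 v') p.2 = pv (Afun f) p := by
    rw [hαA.deriv_eq]
    exact (curve_v_hasDerivAt hAd).deriv
  have h1 : HasDerivAt (fun u' => β u' p.2) (-(pv (Afun f) p)) p.1 := by
    have h := (hCR p.1 p.2).2
    rwa [hderiv] at h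
  have hβB : (fun u' => β u' p.2) =ᶠ[𝓝 p.1] (fun u' => Bfun f (u', p.2)) := by
    filter_upwards [humem] with u' hu'
    exact (B_eq hrep hax hu').symm
  have h2 : HasDerivAt (fun u' => β u' p.2) (pu (Bfun f) p) p.1 :=
    (curve_u_hasDerivAt hBd).congr_of_eventuallyEq hβB
  exact h2.unique h1

end CR

/-! ### Pointwise derivative identities on `Wset` -/

lemma hasFD_smul_snd {φ : ℝ × ℝ → ℍ[ℝ]} (hd : DifferentiableAt ℝ φ p) :
    HasFDerivAt (fun z : ℝ × ℝ => z.2 • φ z)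
      (p.2 • fderiv ℝ φ p + (ContinuousLinearMap.snd ℝ ℝ ℝ).smulRight (φ p)) p :=
  (ContinuousLinearMap.snd ℝ ℝ ℝ).hasFDerivAt.smul hd.hasFDerivAt

section Ids
variable (hU : IsOpen U)
  (hax : ∀ q ∈ U, ∀ J : ℍ[ℝ], J.re = 0 → ‖J‖ = 1 → (q.re : ℍ[ℝ]) + ‖q.im‖ • J ∈ U)
  (hf : ContDiffOn ℝ 3 f U)
  (hCR : ∀ u v : ℝ,
      HasDerivAt (fun u' => α u' v) (deriv (fun v' => β u v') v) u ∧
      HasDerivAt (fun u' => β u' v) (-(deriv (fun v' => α u v') v)) u)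
  (hrep : ∀ q ∈ U, ∀ J : ℍ[ℝ], J.re = 0 → ‖J‖ = 1 → ∀ u v : ℝ,
      q = (u : ℍ[ℝ]) + v • J → f q = α u v + J * β u v)

include hU in
/-- `B = v • Bt` near points of `W`. -/
lemma B_ev_eq (hp : p ∈ Wset U) :
    Bfun f =ᶠ[𝓝 p] (fun z => z.2 • Btf f z) := by
  filter_upwards [(isOpen_Wset (U := U) hU).mem_nhds hp] with z hz
  rw [Btf, smul_smul, mul_inv_cancel₀ hz.1.ne', one_smul]

include hU hax hf

lemma puB_eq (hp : p ∈ Wset U) : pu (Bfun f) p = p.2 • pu (Btf f) p := by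
  have hWo := isOpen_Wset (U := U) hU
  have hBt : DifferentiableAt ℝ (Btf f) p :=
    (cdAt (contDiffOn_Btf hax hf) hWo hp).differentiableAt (by norm_num)
  have h := Filter.EventuallyEq.fderiv_eq (𝕜 := ℝ) (B_ev_eq (f := f) hU hp)
  show fderiv ℝ (Bfun f) p (1, 0) = _
  rw [h, (hasFD_smul_snd hBt).fderiv]
  simp [pu]

lemma pvB_eq (hp : p ∈ Wset U) : pv (Bfun f) p = Btf f p + p.2 • pv (Btf f) p := by
  have hWo := isOpen_Wset (U := U) hU
  have hBt : DifferentiableAt ℝ (Btf f) p :=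
    (cdAt (contDiffOn_Btf hax hf) hWo hp).differentiableAt (by norm_num)
  have h := Filter.EventuallyEq.fderiv_eq (𝕜 := ℝ) (B_ev_eq (f := f) hU hp)
  show fderiv ℝ (Bfun f) p (0, 1) = _
  rw [h, (hasFD_smul_snd hBt).fderiv]
  simp [pv]
  abel

include hCR hrep

lemma puA_eq (hp : p ∈ Wset U) :
    pu (Afun f) p = Btf f p + p.2 • pv (Btf f) p := by
  rw [CR_A hU hax hf hCR hrep hp, pvB_eq hU hax hf hp]

lemma pvA_eq (hp : p ∈ Wset U) :
    pv (Afun f) p = -(p.2 • pu (Btf f) p) := by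
  have h := CR_B hU hax hf hCR hrep hp
  rw [puB_eq hU hax hf hp] at h
  rw [h, neg_neg]

lemma puBt_eq (hp : p ∈ Wset U) :
    pu (Btf f) p = -(p.2⁻¹ • pv (Afun f) p) := by
  rw [pvA_eq hU hax hf hCR hrep hp, smul_neg, smul_smul,
    inv_mul_cancel₀ hp.1.ne', one_smul, neg_neg]

/-- The key second-order identity. -/
lemma puuBt_eq (hp : p ∈ Wset U) :
    pu (pu (Btf f)) p
      = -(p.2⁻¹ • ((2 : ℝ) • pv (Btf f) p + p.2 • pv (pv (Btf f)) p)) := by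
  have hWo := isOpen_Wset (U := U) hU
  have hA3 : ContDiffAt ℝ 3 (Afun f) p := cdAt (contDiffOn_Afun hax hf) hWo hp
  have hBt3 : ContDiffAt ℝ 3 (Btf f) p := cdAt (contDiffOn_Btf hax hf) hWo hp
  have hpvA_d : DifferentiableAt ℝ (pv (Afun f)) p := by
    have : ContDiffAt ℝ 2 (pv (Afun f)) p := contDiffAt_pv (n := 2) hA3
    exact this.differentiableAt (by norm_num)
  have hBt_d : DifferentiableAt ℝ (Btf f) p := hBt3.differentiableAt (by norm_num)
  have hpvBt_d : DifferentiableAt ℝ (pv (Btf f)) p := by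
    have : ContDiffAt ℝ 2 (pv (Btf f)) p := contDiffAt_pv (n := 2) hBt3
    exact this.differentiableAt (by norm_num)
  -- puBt agrees with -(v⁻¹ • pv A) near p
  have hev : pu (Btf f) =ᶠ[𝓝 p] (fun z => -(z.2⁻¹ • pv (Afun f) z)) := by
    filter_upwards [hWo.mem_nhds hp] with z hz
    exact puBt_eq hU hax hf hCR hrep hz
  have hinv : HasFDerivAt (fun z : ℝ × ℝ => z.2⁻¹)
      ((-(p.2 ^ 2)⁻¹) • ContinuousLinearMap.snd ℝ ℝ ℝ) p :=
    (hasDerivAt_inv hp.1.ne').comp_hasFDerivAt p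
      (ContinuousLinearMap.snd ℝ ℝ ℝ).hasFDerivAt
  have hF : HasFDerivAt (fun z : ℝ × ℝ => -(z.2⁻¹ • pv (Afun f) z))
      (-(p.2⁻¹ • fderiv ℝ (pv (Afun f)) p +
        ((-(p.2 ^ 2)⁻¹) • ContinuousLinearMap.snd ℝ ℝ ℝ).smulRight (pv (Afun f) p))) p :=
    (hinv.smul hpvA_d.hasFDerivAt).neg
  have h1 : pu (pu (Btf f)) p = -(p.2⁻¹ • pu (pv (Afun f)) p) := by
    show fderiv ℝ (pu (Btf f)) p (1, 0) = _
    rw [Filter.EventuallyEq.fderiv_eq (𝕜 := ℝ) hev, hF.fderiv]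
    simp [pu]
  -- symmetry for A, then pv of (puA_eq)-form
  have h2 : pu (pv (Afun f)) p = pv (pu (Afun f)) p :=
    pu_pv_symm (hA3.of_le (by norm_cast))
  have hev2 : pu (Afun f) =ᶠ[𝓝 p] (fun z => Btf f z + z.2 • pv (Btf f) z) := by
    filter_upwards [hWo.mem_nhds hp] with z hz
    exact puA_eq hU hax hf hCR hrep hz
  have hG : HasFDerivAt (fun z : ℝ × ℝ => Btf f z + z.2 • pv (Btf f) z)
      (fderiv ℝ (Btf f) p + (p.2 • fderiv ℝ (pv (Btf f)) p +
        (ContinuousLinearMap.snd ℝ ℝ ℝ).smulRight (pv (Btf f) p))) p :=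
    hBt_d.hasFDerivAt.add (hasFD_smul_snd hpvBt_d)
  have h3 : pv (pu (Afun f)) p = pv (Btf f) p + (p.2 • pv (pv (Btf f)) p + pv (Btf f) p) := by
    show fderiv ℝ (pu (Afun f)) p (0, 1) = _
    rw [Filter.EventuallyEq.fderiv_eq (𝕜 := ℝ) hev2, hG.fderiv]
    simp [pv]
  rw [h1, h2, h3]
  congr 1
  rw [two_smul]
  module

end Ids

/-! ### The iterated coefficient functions -/

def Gone (f : ℍ[ℝ] → ℍ[ℝ]) : ℝ × ℝ → ℍ[ℝ] :=
  fun z => (4 : ℝ) • Btf f z + (2 * z.2) • pv (Btf f) z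
def Hone (f : ℍ[ℝ] → ℍ[ℝ]) : ℝ × ℝ → ℍ[ℝ] := fun z => (2 : ℝ) • pu (Btf f) z
def Gtwo (f : ℍ[ℝ] → ℍ[ℝ]) : ℝ × ℝ → ℍ[ℝ] := fun z => (-2 : ℝ) • pu (Btf f) z
def Htwo (f : ℍ[ℝ] → ℍ[ℝ]) : ℝ × ℝ → ℍ[ℝ] := fun z => (2 * z.2⁻¹) • pv (Btf f) z

section GH
variable (hBt3 : ContDiffAt ℝ 3 (Btf f) p)

lemma Bt_d (hBt3 : ContDiffAt ℝ 3 (Btf f) p) : DifferentiableAt ℝ (Btf f) p :=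
  hBt3.differentiableAt (by norm_num)

lemma puBt_d (hBt3 : ContDiffAt ℝ 3 (Btf f) p) : DifferentiableAt ℝ (pu (Btf f)) p :=
  (contDiffAt_pu (n := 2) hBt3).differentiableAt (by norm_num)

lemma pvBt_d (hBt3 : ContDiffAt ℝ 3 (Btf f) p) : DifferentiableAt ℝ (pv (Btf f)) p :=
  (contDiffAt_pv (n := 2) hBt3).differentiableAt (by norm_num)

include hBt3

lemma hasFD_Gone : HasFDerivAt (Gone f)
    ((4 : ℝ) • fderiv ℝ (Btf f) p +
      (((2 * p.2) • fderiv ℝ (pv (Btf f)) p) +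
        ((2 : ℝ) • ContinuousLinearMap.snd ℝ ℝ ℝ).smulRight (pv (Btf f) p))) p := by
  exact ((Bt_d hBt3).hasFDerivAt.const_smul (4 : ℝ)).add
    ((((ContinuousLinearMap.snd ℝ ℝ ℝ).hasFDerivAt.const_mul (2 : ℝ))).smul
      (pvBt_d hBt3).hasFDerivAt)

lemma hasFD_Hone : HasFDerivAt (Hone f) ((2 : ℝ) • fderiv ℝ (pu (Btf f)) p) p :=
  (puBt_d hBt3).hasFDerivAt.const_smul (2 : ℝ)

lemma hasFD_Gtwo : HasFDerivAt (Gtwo f) ((-2 : ℝ) • fderiv ℝ (pu (Btf f)) p) p :=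
  (puBt_d hBt3).hasFDerivAt.const_smul (-2 : ℝ)

lemma hasFD_Htwo (hp2 : p.2 ≠ 0) : HasFDerivAt (Htwo f)
    (((2 * p.2⁻¹) • fderiv ℝ (pv (Btf f)) p) +
      ((2 * -(p.2 ^ 2)⁻¹) • ContinuousLinearMap.snd ℝ ℝ ℝ).smulRight (pv (Btf f) p)) p := by
  have hc : HasFDerivAt (fun z : ℝ × ℝ => 2 * z.2⁻¹)
      ((2 * -(p.2 ^ 2)⁻¹) • ContinuousLinearMap.snd ℝ ℝ ℝ) p := by
    have h := ((hasDerivAt_inv hp2).const_mul (2 : ℝ)).comp_hasFDerivAt p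
      (ContinuousLinearMap.snd ℝ ℝ ℝ).hasFDerivAt
    exact h
  exact hc.smul (pvBt_d hBt3).hasFDerivAt

lemma pu_Gone : pu (Gone f) p = (4 : ℝ) • pu (Btf f) p + (2 * p.2) • pu (pv (Btf f)) p := by
  show fderiv ℝ (Gone f) p (1, 0) = _
  rw [(hasFD_Gone hBt3).fderiv]
  simp [pu]

lemma pv_Gone : pv (Gone f) p
    = (4 : ℝ) • pv (Btf f) p + ((2 * p.2) • pv (pv (Btf f)) p + (2 : ℝ) • pv (Btf f) p) := by
  show fderiv ℝ (Gone f) p (0, 1) = _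
  rw [(hasFD_Gone hBt3).fderiv]
  simp [pv]

lemma pu_Hone : pu (Hone f) p = (2 : ℝ) • pu (pu (Btf f)) p := by
  show fderiv ℝ (Hone f) p (1, 0) = _
  rw [(hasFD_Hone hBt3).fderiv]
  simp [pu]

lemma pv_Hone : pv (Hone f) p = (2 : ℝ) • pv (pu (Btf f)) p := by
  show fderiv ℝ (Hone f) p (0, 1) = _
  rw [(hasFD_Hone hBt3).fderiv]
  simp [pv]

lemma pu_Gtwo : pu (Gtwo f) p = (-2 : ℝ) • pu (pu (Btf f)) p := by
  show fderiv ℝ (Gtwo f) p (1, 0) = _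
  rw [(hasFD_Gtwo hBt3).fderiv]
  simp [pu]

lemma pv_Gtwo : pv (Gtwo f) p = (-2 : ℝ) • pv (pu (Btf f)) p := by
  show fderiv ℝ (Gtwo f) p (0, 1) = _
  rw [(hasFD_Gtwo hBt3).fderiv]
  simp [pv]

lemma pu_Htwo (hp2 : p.2 ≠ 0) : pu (Htwo f) p = (2 * p.2⁻¹) • pu (pv (Btf f)) p := by
  show fderiv ℝ (Htwo f) p (1, 0) = _
  rw [(hasFD_Htwo hBt3 hp2).fderiv]
  simp [pu]

lemma pv_Htwo (hp2 : p.2 ≠ 0) : pv (Htwo f) p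
    = (2 * p.2⁻¹) • pv (pv (Btf f)) p + (2 * -(p.2 ^ 2)⁻¹) • pv (Btf f) p := by
  show fderiv ℝ (Htwo f) p (0, 1) = _
  rw [(hasFD_Htwo hBt3 hp2).fderiv]
  simp [pv]

lemma Gone_d : DifferentiableAt ℝ (Gone f) p := (hasFD_Gone hBt3).differentiableAt
lemma Hone_d : DifferentiableAt ℝ (Hone f) p := (hasFD_Hone hBt3).differentiableAt
lemma Gtwo_d : DifferentiableAt ℝ (Gtwo f) p := (hasFD_Gtwo hBt3).differentiableAt
lemma Htwo_d (hp2 : p.2 ≠ 0) : DifferentiableAt ℝ (Htwo f) p :=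
  (hasFD_Htwo hBt3 hp2).differentiableAt

end GH

/-! ### Congruence and additivity for the operators -/

lemma Dop_congr {φ ψ : ℍ[ℝ] → ℍ[ℝ]} {x : ℍ[ℝ]} (h : φ =ᶠ[𝓝 x] ψ) :
    Dop φ x = Dop ψ x := by
  unfold Dop pd
  rw [Filter.EventuallyEq.fderiv_eq (𝕜 := ℝ) h]

lemma Dbar_congr {φ ψ : ℍ[ℝ] → ℍ[ℝ]} {x : ℍ[ℝ]} (h : φ =ᶠ[𝓝 x] ψ) :
    DbarOp φ x = DbarOp ψ x := by
  unfold DbarOp pd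
  rw [Filter.EventuallyEq.fderiv_eq (𝕜 := ℝ) h]

lemma Dop_add {φ ψ : ℍ[ℝ] → ℍ[ℝ]} {x : ℍ[ℝ]} (hφ : DifferentiableAt ℝ φ x)
    (hψ : DifferentiableAt ℝ ψ x) :
    Dop (fun y => φ y + ψ y) x = Dop φ x + Dop ψ x := by
  unfold Dop pd
  rw [fderiv_fun_add hφ hψ]
  simp only [ContinuousLinearMap.add_apply, mul_add]
  abel

lemma Dbar_add {φ ψ : ℍ[ℝ] → ℍ[ℝ]} {x : ℍ[ℝ]} (hφ : DifferentiableAt ℝ φ x)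
    (hψ : DifferentiableAt ℝ ψ x) :
    DbarOp (fun y => φ y + ψ y) x = DbarOp φ x + DbarOp ψ x := by
  unfold DbarOp pd
  rw [fderiv_fun_add hφ hψ]
  simp only [ContinuousLinearMap.add_apply, mul_add]
  abel

/-! ### The three main computational steps -/

lemma isOpen_O (hU : IsOpen U) : IsOpen (U ∩ {y : ℍ[ℝ] | y.im ≠ 0}) := by
  apply hU.inter
  have : {y : ℍ[ℝ] | y.im ≠ 0} = (fun y : ℍ[ℝ] => y.im) ⁻¹' ({0}ᶜ) := rfl
  rw [this]
  exact isOpen_compl_singleton.preimage qim.continuous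

section Steps
variable (hU : IsOpen U)
  (hax : ∀ q ∈ U, ∀ J : ℍ[ℝ], J.re = 0 → ‖J‖ = 1 → (q.re : ℍ[ℝ]) + ‖q.im‖ • J ∈ U)
  (hf : ContDiffOn ℝ 3 f U)
  (hCR : ∀ u v : ℝ,
      HasDerivAt (fun u' => α u' v) (deriv (fun v' => β u v') v) u ∧
      HasDerivAt (fun u' => β u' v) (-(deriv (fun v' => α u v') v)) u)
  (hrep : ∀ q ∈ U, ∀ J : ℍ[ℝ], J.re = 0 → ‖J‖ = 1 → ∀ u v : ℝ,
      q = (u : ℍ[ℝ]) + v • J → f q = α u v + J * β u v)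

include hax in
lemma Pm_mem_W {x : ℍ[ℝ]} (hx : x ∈ U) (hxim : x.im ≠ 0) : Pm x ∈ Wset U :=
  ⟨norm_pos_iff.2 hxim, hax _ hx e1 rfl norm_e1⟩

include hU hax hf hCR hrep

lemma step1 {x : ℍ[ℝ]} (hx : x ∈ U) (hxim : x.im ≠ 0) :
    DbarOp f x = Sfun (Gone f) x + Tfun (Hone f) x := by
  have hr : (0:ℝ) < ‖x.im‖ := norm_pos_iff.2 hxim
  have hp : Pm x ∈ Wset U := Pm_mem_W hax hx hxim
  have hWo := isOpen_Wset (U := U) hU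
  have hA3 : ContDiffAt ℝ 3 (Afun f) (Pm x) := cdAt (contDiffOn_Afun hax hf) hWo hp
  have hBt3 : ContDiffAt ℝ 3 (Btf f) (Pm x) := cdAt (contDiffOn_Btf hax hf) hWo hp
  have hAd : DifferentiableAt ℝ (Afun f) (Pm x) := hA3.differentiableAt (by norm_num)
  have hBtd := Bt_d hBt3
  have hev : f =ᶠ[𝓝 x] fun y => Sfun (Afun f) y + Tfun (Btf f) y := by
    filter_upwards [(isOpen_O hU).mem_nhds ⟨hx, hxim⟩] with y hy
    exact f_eq_ST hrep hax hy.1 hy.2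
  rw [Dbar_congr hev,
    Dbar_add (differentiableAt_Sfun hxim hAd) (differentiableAt_Tfun hxim hBtd),
    Dbar_Sfun hxim hAd, Dbar_Tfun hxim hBtd,
    puA_eq hU hax hf hCR hrep hp, pvA_eq hU hax hf hCR hrep hp]
  show _ = Gone f (Pm x) + x.im * Hone f (Pm x)
  unfold Gone Hone
  simp only [Pm, mul_neg, smul_neg, mul_smul_comm, mul_add, smul_smul, smul_add, neg_neg]
  match_scalars <;> (try field_simp) <;> ring

lemma step2 {x : ℍ[ℝ]} (hx : x ∈ U) (hxim : x.im ≠ 0) :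
    Dop (DbarOp f) x = Sfun (Gtwo f) x + Tfun (Htwo f) x := by
  have hr : (0:ℝ) < ‖x.im‖ := norm_pos_iff.2 hxim
  have hp : Pm x ∈ Wset U := Pm_mem_W hax hx hxim
  have hWo := isOpen_Wset (U := U) hU
  have hBt3 : ContDiffAt ℝ 3 (Btf f) (Pm x) := cdAt (contDiffOn_Btf hax hf) hWo hp
  have hev : DbarOp f =ᶠ[𝓝 x] fun y => Sfun (Gone f) y + Tfun (Hone f) y := by
    filter_upwards [(isOpen_O hU).mem_nhds ⟨hx, hxim⟩] with y hy
    exact step1 hU hax hf hCR hrep hy.1 hy.2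
  rw [Dop_congr hev,
    Dop_add (differentiableAt_Sfun hxim (Gone_d hBt3)) (differentiableAt_Tfun hxim (Hone_d hBt3)),
    Dop_Sfun hxim (Gone_d hBt3), Dop_Tfun hxim (Hone_d hBt3),
    pu_Gone hBt3, pv_Gone hBt3, pu_Hone hBt3, pv_Hone hBt3,
    puuBt_eq hU hax hf hCR hrep hp,
    pu_pv_symm (hBt3.of_le (by norm_cast))]
  show _ = Gtwo f (Pm x) + x.im * Htwo f (Pm x)
  unfold Gtwo Htwo Hone
  simp only [Pm, mul_neg, smul_neg, mul_smul_comm, mul_add, smul_smul, smul_add, neg_neg,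
    mul_sub, smul_sub]
  match_scalars <;> (try field_simp) <;> ring

lemma step3 {x : ℍ[ℝ]} (hx : x ∈ U) (hxim : x.im ≠ 0) :
    Dop (Dop (DbarOp f)) x = 0 := by
  have hr : (0:ℝ) < ‖x.im‖ := norm_pos_iff.2 hxim
  have hr2 : (Pm x).2 ≠ 0 := hr.ne'
  have hp : Pm x ∈ Wset U := Pm_mem_W hax hx hxim
  have hWo := isOpen_Wset (U := U) hU
  have hBt3 : ContDiffAt ℝ 3 (Btf f) (Pm x) := cdAt (contDiffOn_Btf hax hf) hWo hp
  have hev : Dop (DbarOp f) =ᶠ[𝓝 x] fun y => Sfun (Gtwo f) y + Tfun (Htwo f) y := by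
    filter_upwards [(isOpen_O hU).mem_nhds ⟨hx, hxim⟩] with y hy
    exact step2 hU hax hf hCR hrep hy.1 hy.2
  rw [Dop_congr hev,
    Dop_add (differentiableAt_Sfun hxim (Gtwo_d hBt3))
      (differentiableAt_Tfun hxim (Htwo_d hBt3 hr2)),
    Dop_Sfun hxim (Gtwo_d hBt3), Dop_Tfun hxim (Htwo_d hBt3 hr2),
    pu_Gtwo hBt3, pv_Gtwo hBt3, pu_Htwo hBt3 hr2, pv_Htwo hBt3 hr2,
    puuBt_eq hU hax hf hCR hrep hp,
    pu_pv_symm (hBt3.of_le (by norm_cast))]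
  unfold Htwo
  simp only [Pm, mul_neg, smul_neg, mul_smul_comm, mul_add, smul_smul, smul_add, neg_neg,
    mul_sub, smul_sub]
  match_scalars <;> (try field_simp) <;> ring

end Steps

/-! ### Continuity of the third-order operator -/

lemma contDiffOn_pd {n : ℕ} {φ : ℍ[ℝ] → ℍ[ℝ]} (hU : IsOpen U)
    (h : ContDiffOn ℝ (n + 1 : ℕ) φ U) (a : ℍ[ℝ]) :
    ContDiffOn ℝ n (pd a φ) U := by
  have h1 : ContDiffOn ℝ n (fderiv ℝ φ) U := by
    apply h.fderiv_of_isOpen hU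
    norm_cast
  exact h1.clm_apply contDiffOn_const

lemma contDiffOn_Dbar {n : ℕ} {φ : ℍ[ℝ] → ℍ[ℝ]} (hU : IsOpen U)
    (h : ContDiffOn ℝ (n + 1 : ℕ) φ U) :
    ContDiffOn ℝ n (DbarOp φ) U := by
  show ContDiffOn ℝ n
    (fun q => pd 1 φ q - e1 * pd e1 φ q - e2 * pd e2 φ q - e3 * pd e3 φ q) U
  exact (((contDiffOn_pd hU h 1).sub (contDiffOn_const.mul (contDiffOn_pd hU h e1))).sub
    (contDiffOn_const.mul (contDiffOn_pd hU h e2))).sub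
    (contDiffOn_const.mul (contDiffOn_pd hU h e3))

lemma contDiffOn_Dop {n : ℕ} {φ : ℍ[ℝ] → ℍ[ℝ]} (hU : IsOpen U)
    (h : ContDiffOn ℝ (n + 1 : ℕ) φ U) :
    ContDiffOn ℝ n (Dop φ) U := by
  show ContDiffOn ℝ n
    (fun q => pd 1 φ q + e1 * pd e1 φ q + e2 * pd e2 φ q + e3 * pd e3 φ q) U
  exact (((contDiffOn_pd hU h 1).add (contDiffOn_const.mul (contDiffOn_pd hU h e1))).add
    (contDiffOn_const.mul (contDiffOn_pd hU h e2))).add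
    (contDiffOn_const.mul (contDiffOn_pd hU h e3))

lemma continuousOn_DDDbar (hU : IsOpen U) (hf : ContDiffOn ℝ 3 f U) :
    ContinuousOn (Dop (Dop (DbarOp f))) U := by
  have h3 : ContDiffOn ℝ (2 + 1 : ℕ) f U := by exact_mod_cast hf
  have h2 : ContDiffOn ℝ (1 + 1 : ℕ) (DbarOp f) U := contDiffOn_Dbar hU h3
  have h1 : ContDiffOn ℝ (0 + 1 : ℕ) (Dop (DbarOp f)) U := contDiffOn_Dop hU h2
  have h0 : ContDiffOn ℝ (0 : ℕ) (Dop (Dop (DbarOp f))) U := contDiffOn_Dop hU h1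
  exact h0.continuousOn
end QSlice

theorem Dbar_of_sliceHyp_is_polyanalytic (U : Set ℍ[ℝ]) (hU : IsOpen U)
    (hax : ∀ q ∈ U, ∀ J : ℍ[ℝ], J.re = 0 → ‖J‖ = 1 → (q.re : ℍ[ℝ]) + ‖q.im‖ • J ∈ U)
    (f : ℍ[ℝ] → ℍ[ℝ]) (hf : ContDiffOn ℝ 3 f U) (hsh : IsSliceHyp U f) :
    ∀ q ∈ U, Dop (Dop (DbarOp f)) q = 0 := by
  obtain ⟨α, β, hodd, hCR, hrep⟩ := hsh
  intro q hq
  by_cases hqim : q.im = 0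
  · -- axis case: continuity + density of the off-axis set
    have hqI : q.imI = 0 := by
      have := congrArg QuaternionAlgebra.imI hqim
      simpa using this
    have hcont : ContinuousWithinAt (Dop (Dop (DbarOp f))) U q :=
      (QSlice.continuousOn_DDDbar hU hf) q hq
    have hx : Filter.Tendsto (fun n : ℕ => q + ((n : ℝ) + 1)⁻¹ • e1)
        Filter.atTop (nhds q) := by
      have h0 : Filter.Tendsto (fun n : ℕ => ((n : ℝ) + 1)⁻¹) Filter.atTop (nhds 0) := by
        have := tendsto_one_div_add_atTop_nhds_zero_nat (𝕜 := ℝ)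
        simpa [one_div] using this
      have h1 := h0.smul_const e1
      rw [zero_smul] at h1
      simpa using tendsto_const_nhds.add h1
    have hmem : ∀ᶠ n : ℕ in Filter.atTop, q + ((n : ℝ) + 1)⁻¹ • e1 ∈ U :=
      hx.eventually_mem (hU.mem_nhds hq)
    have hlim : Filter.Tendsto (fun n : ℕ => Dop (Dop (DbarOp f)) (q + ((n : ℝ) + 1)⁻¹ • e1))
        Filter.atTop (nhds (Dop (Dop (DbarOp f)) q)) := by
      apply hcont.tendsto.comp
      rw [tendsto_nhdsWithin_iff]
      exact ⟨hx, hmem⟩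
    have hzero : (fun n : ℕ => Dop (Dop (DbarOp f)) (q + ((n : ℝ) + 1)⁻¹ • e1))
        =ᶠ[Filter.atTop] (fun _ => (0 : ℍ[ℝ])) := by
      filter_upwards [hmem] with n hn
      apply QSlice.step3 hU hax hf hCR hrep hn
      intro h
      have h2 := congrArg QuaternionAlgebra.imI h
      simp [hqI] at h2
      exact (by positivity : ((n : ℝ) + 1) ≠ 0) h2
    exact tendsto_nhds_unique (hlim.congr' hzero) tendsto_const_nhds
  · exact QSlice.step3 hU hax hf hCR hrep hq hqim
end
end

section
/- If f and g are left slice hyperholomorphic functions on an axially symmetric slice domain U ⊂ ℍ (with U connected and intersecting ℝ) and D(f - g) = 0 on U, where D is the Cauchy-Fueter operator, then f - g is constant on U. -/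
open scoped Quaternion

section Auxiliary

open Quaternion Topology Filter
open scoped RealInnerProductSpace

lemma e1_re : e1.re = 0 := rfl
lemma e1_imI : e1.imI = 1 := rfl
lemma e1_imJ : e1.imJ = 0 := rfl
lemma e1_imK : e1.imK = 0 := rfl
lemma e2_re : e2.re = 0 := rfl
lemma e2_imI : e2.imI = 0 := rfl
lemma e2_imJ : e2.imJ = 1 := rfl
lemma e2_imK : e2.imK = 0 := rfl
lemma e3_re : e3.re = 0 := rfl
lemma e3_imI : e3.imI = 0 := rfl
lemma e3_imJ : e3.imJ = 0 := rfl
lemma e3_imK : e3.imK = 1 := rfl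

lemma coe_eq_smul_one (r : ℝ) : (r : ℍ[ℝ]) = r • (1 : ℍ[ℝ]) := by
  rw [← Quaternion.coe_one]; ext <;> simp

lemma hasDerivAt_coe (u : ℝ) : HasDerivAt (fun u' : ℝ => (u':ℍ[ℝ])) 1 u := by
  have h1 : HasDerivAt (fun u' : ℝ => u' • (1:ℍ[ℝ])) ((1:ℝ) • (1:ℍ[ℝ])) u :=
    (hasDerivAt_id u).smul_const (1:ℍ[ℝ])
  simp only [one_smul] at h1
  exact h1.congr_of_eventuallyEq (by filter_upwards with x using coe_eq_smul_one x)

lemma curve_deriv {f : ℍ[ℝ] → ℍ[ℝ]} {q : ℍ[ℝ]} (hf : DifferentiableAt ℝ f q) (K : ℍ[ℝ]) :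
    HasDerivAt (fun t : ℝ => f (q + t • K)) (fderiv ℝ f q K) 0 := by
  have hc : HasDerivAt (fun t : ℝ => q + t • K) K 0 := by
    simpa using ((hasDerivAt_id (0:ℝ)).smul_const K).const_add q
  have hl : HasFDerivAt f (fderiv ℝ f q) ((fun t : ℝ => q + t • K) 0) := by
    simpa using hf.hasFDerivAt
  exact hl.comp_hasDerivAt 0 hc

lemma coe_curve_deriv {f : ℍ[ℝ] → ℍ[ℝ]} {q : ℍ[ℝ]} (hf : DifferentiableAt ℝ f q)
    {u v : ℝ} {J : ℍ[ℝ]} (hq : q = (u:ℍ[ℝ]) + v • J) :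
    HasDerivAt (fun u' : ℝ => f ((u':ℍ[ℝ]) + v • J)) (fderiv ℝ f q 1) u := by
  have hc : HasDerivAt (fun u' : ℝ => (u':ℍ[ℝ]) + v • J) 1 u := (hasDerivAt_coe u).add_const _
  have hl : HasFDerivAt f (fderiv ℝ f q) ((fun u' : ℝ => (u':ℍ[ℝ]) + v • J) u) := by
    simp only []; rw [← hq]; exact hf.hasFDerivAt
  exact hl.comp_hasDerivAt u hc

lemma slice_curve_deriv {f : ℍ[ℝ] → ℍ[ℝ]} {q : ℍ[ℝ]} (hf : DifferentiableAt ℝ f q)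
    {u v : ℝ} {J : ℍ[ℝ]} (hq : q = (u:ℍ[ℝ]) + v • J) :
    HasDerivAt (fun v' : ℝ => f ((u:ℍ[ℝ]) + v' • J)) (fderiv ℝ f q J) v := by
  have hc : HasDerivAt (fun v' : ℝ => (u:ℍ[ℝ]) + v' • J) J v := by
    simpa using ((hasDerivAt_id v).smul_const J).const_add (u:ℍ[ℝ])
  have hl : HasFDerivAt f (fderiv ℝ f q) ((fun v' : ℝ => (u:ℍ[ℝ]) + v' • J) v) := by
    simp only []; rw [← hq]; exact hf.hasFDerivAt
  exact hl.comp_hasDerivAt v hc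

lemma unit_im_mul_self {J : ℍ[ℝ]} (h : J.re = 0) (hn : ‖J‖ = 1) : J * J = -1 := by
  have hs : star J = -J := by ext <;> simp [h]
  have h2 : star J * J = ((normSq J : ℝ) : ℍ[ℝ]) := Quaternion.star_mul_self J
  have h3 : normSq J = 1 := by rw [Quaternion.normSq_eq_norm_mul_self, hn]; ring
  rw [hs, h3] at h2
  have h4 : -(J * J) = (1 : ℍ[ℝ]) := by simpa [neg_mul] using h2
  linear_combination (norm := module) -h4

lemma unit_im_sq_sum {J : ℍ[ℝ]} (h : J.re = 0) (hn : ‖J‖ = 1) :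
    J.imI^2 + J.imJ^2 + J.imK^2 = 1 := by
  have h3 : normSq J = 1 := by rw [Quaternion.normSq_eq_norm_mul_self, hn]; ring
  rw [Quaternion.normSq_def'] at h3
  rw [h] at h3
  linarith [h3]

lemma inner_e1_q (J : ℍ[ℝ]) : ⟪e1, J⟫ = J.imI := by
  simp [Quaternion.inner_def, Quaternion.re_mul, e1_re, e1_imI, e1_imJ, e1_imK]

lemma inner_e2_q (J : ℍ[ℝ]) : ⟪e2, J⟫ = J.imJ := by
  simp [Quaternion.inner_def, Quaternion.re_mul, e2_re, e2_imI, e2_imJ, e2_imK]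

lemma inner_e3_q (J : ℍ[ℝ]) : ⟪e3, J⟫ = J.imK := by
  simp [Quaternion.inner_def, Quaternion.re_mul, e3_re, e3_imI, e3_imJ, e3_imK]

lemma sum_identity (J Av Bv B : ℍ[ℝ]) (hJ0 : J.re = 0)
    (hn : J.imI^2 + J.imJ^2 + J.imK^2 = 1) (w : ℝ) :
    (Bv + J * (-Av))
    + e1 * (J.imI • (Av + J * Bv) + w • ((e1 - J.imI • J) * B))
    + e2 * (J.imJ • (Av + J * Bv) + w • ((e2 - J.imJ • J) * B))
    + e3 * (J.imK • (Av + J * Bv) + w • ((e3 - J.imK • J) * B)) = (-2*w) • B := by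
  ext
  · simp only [e1_re, e1_imI, e1_imJ, e1_imK, e2_re, e2_imI, e2_imJ, e2_imK,
      e3_re, e3_imI, e3_imJ, e3_imK, Quaternion.re_add, Quaternion.imI_add, Quaternion.imJ_add,
      Quaternion.imK_add, Quaternion.re_mul, Quaternion.imI_mul, Quaternion.imJ_mul,
      Quaternion.imK_mul, Quaternion.re_smul, Quaternion.imI_smul, Quaternion.imJ_smul,
      Quaternion.imK_smul, Quaternion.re_sub, Quaternion.imI_sub, Quaternion.imJ_sub,
      Quaternion.imK_sub, Quaternion.re_neg, Quaternion.imI_neg, Quaternion.imJ_neg,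
      Quaternion.imK_neg, hJ0, smul_eq_mul]
    linear_combination (w * B.re - Bv.re) * hn
  · simp only [e1_re, e1_imI, e1_imJ, e1_imK, e2_re, e2_imI, e2_imJ, e2_imK,
      e3_re, e3_imI, e3_imJ, e3_imK, Quaternion.re_add, Quaternion.imI_add, Quaternion.imJ_add,
      Quaternion.imK_add, Quaternion.re_mul, Quaternion.imI_mul, Quaternion.imJ_mul,
      Quaternion.imK_mul, Quaternion.re_smul, Quaternion.imI_smul, Quaternion.imJ_smul,
      Quaternion.imK_smul, Quaternion.re_sub, Quaternion.imI_sub, Quaternion.imJ_sub,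
      Quaternion.imK_sub, Quaternion.re_neg, Quaternion.imI_neg, Quaternion.imJ_neg,
      Quaternion.imK_neg, hJ0, smul_eq_mul]
    linear_combination (w * B.imI - Bv.imI) * hn
  · simp only [e1_re, e1_imI, e1_imJ, e1_imK, e2_re, e2_imI, e2_imJ, e2_imK,
      e3_re, e3_imI, e3_imJ, e3_imK, Quaternion.re_add, Quaternion.imI_add, Quaternion.imJ_add,
      Quaternion.imK_add, Quaternion.re_mul, Quaternion.imI_mul, Quaternion.imJ_mul,
      Quaternion.imK_mul, Quaternion.re_smul, Quaternion.imI_smul, Quaternion.imJ_smul,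
      Quaternion.imK_smul, Quaternion.re_sub, Quaternion.imI_sub, Quaternion.imJ_sub,
      Quaternion.imK_sub, Quaternion.re_neg, Quaternion.imI_neg, Quaternion.imJ_neg,
      Quaternion.imK_neg, hJ0, smul_eq_mul]
    linear_combination (w * B.imJ - Bv.imJ) * hn
  · simp only [e1_re, e1_imI, e1_imJ, e1_imK, e2_re, e2_imI, e2_imJ, e2_imK,
      e3_re, e3_imI, e3_imJ, e3_imK, Quaternion.re_add, Quaternion.imI_add, Quaternion.imJ_add,
      Quaternion.imK_add, Quaternion.re_mul, Quaternion.imI_mul, Quaternion.imJ_mul,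
      Quaternion.imK_mul, Quaternion.re_smul, Quaternion.imI_smul, Quaternion.imJ_smul,
      Quaternion.imK_smul, Quaternion.re_sub, Quaternion.imI_sub, Quaternion.imJ_sub,
      Quaternion.imK_sub, Quaternion.re_neg, Quaternion.imI_neg, Quaternion.imJ_neg,
      Quaternion.imK_neg, hJ0, smul_eq_mul]
    linear_combination (w * B.imK - Bv.imK) * hn

lemma slice_package {U : Set ℍ[ℝ]} (hU : IsOpen U)
    (hax : ∀ q ∈ U, ∀ J : ℍ[ℝ], J.re = 0 → ‖J‖ = 1 → (q.re : ℍ[ℝ]) + ‖q.im‖ • J ∈ U)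
    {f : ℍ[ℝ] → ℍ[ℝ]} (hfd : ∀ q ∈ U, DifferentiableAt ℝ f q)
    {α β : ℝ → ℝ → ℍ[ℝ]}
    (hCR : ∀ u v : ℝ, HasDerivAt (fun u' => α u' v) (deriv (fun v' => β u v') v) u ∧
      HasDerivAt (fun u' => β u' v) (-(deriv (fun v' => α u v') v)) u)
    (hrep : ∀ q ∈ U, ∀ J : ℍ[ℝ], J.re = 0 → ‖J‖ = 1 → ∀ u v : ℝ,
      q = (u : ℍ[ℝ]) + v • J → f q = α u v + J * β u v)
    {u v : ℝ} {J : ℍ[ℝ]} (hJ0 : J.re = 0) (hJn : ‖J‖ = 1) (hv : 0 < v)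
    (hqU : (u : ℍ[ℝ]) + v • J ∈ U) :
    HasDerivAt (fun v' => α u v') (deriv (fun v' => α u v') v) v ∧
    HasDerivAt (fun v' => β u v') (deriv (fun v' => β u v') v) v ∧
    fderiv ℝ f ((u:ℍ[ℝ]) + v • J) 1
      = deriv (fun v' => β u v') v + J * (-(deriv (fun v' => α u v') v)) ∧
    fderiv ℝ f ((u:ℍ[ℝ]) + v • J) J
      = deriv (fun v' => α u v') v + J * deriv (fun v' => β u v') v ∧
    ∀ K : ℍ[ℝ], K.re = 0 → ⟪K, J⟫ = 0 →
      fderiv ℝ f ((u:ℍ[ℝ]) + v • J) K = v⁻¹ • (K * β u v) := by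
  have hJJ : J * J = -1 := unit_im_mul_self hJ0 hJn
  set q : ℍ[ℝ] := (u:ℍ[ℝ]) + v • J with hq
  have hqre : q.re = u := by simp [hq, hJ0]
  have hqim : q.im = v • J := by ext <;> simp [hq, hJ0]
  have hnim : ‖q.im‖ = v := by
    rw [hqim, norm_smul, hJn, Real.norm_eq_abs, abs_of_pos hv, mul_one]
  have hmJ0 : (-J).re = 0 := by simp [hJ0]
  have hmJn : ‖-J‖ = 1 := by simp [hJn]
  have hq2U : (u:ℍ[ℝ]) + v • (-J) ∈ U := by
    have := hax q hqU (-J) hmJ0 hmJn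
    rwa [hqre, hnim] at this
  have hUv : ∀ᶠ v' in 𝓝 v, (u:ℍ[ℝ]) + v' • J ∈ U := by
    have hc : Continuous fun v' : ℝ => (u:ℍ[ℝ]) + v' • J :=
      continuous_const.add (continuous_id.smul continuous_const)
    exact hc.continuousAt.eventually_mem (hU.mem_nhds (by simpa using hqU))
  have hUv2 : ∀ᶠ v' in 𝓝 v, (u:ℍ[ℝ]) + v' • (-J) ∈ U := by
    have hc : Continuous fun v' : ℝ => (u:ℍ[ℝ]) + v' • (-J) :=
      continuous_const.add (continuous_id.smul continuous_const)
    exact hc.continuousAt.eventually_mem (hU.mem_nhds (by simpa using hq2U))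
  have hrepv : ∀ᶠ v' in 𝓝 v, f ((u:ℍ[ℝ]) + v' • J) = α u v' + J * β u v' := by
    filter_upwards [hUv] with v' hv' using hrep _ hv' J hJ0 hJn u v' rfl
  have hrepv2 : ∀ᶠ v' in 𝓝 v, f ((u:ℍ[ℝ]) + v' • (-J)) = α u v' + (-J) * β u v' := by
    filter_upwards [hUv2] with v' hv' using hrep _ hv' (-J) hmJ0 hmJn u v' rfl
  have hφ : HasDerivAt (fun v' : ℝ => f ((u:ℍ[ℝ]) + v' • J)) (fderiv ℝ f q J) v :=
    slice_curve_deriv (hfd q hqU) hq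
  have hψ : DifferentiableAt ℝ (fun v' : ℝ => f ((u:ℍ[ℝ]) + v' • (-J))) v :=
    (slice_curve_deriv (hfd _ hq2U) rfl).differentiableAt
  have hαv : DifferentiableAt ℝ (fun v' => α u v') v := by
    have heq : (fun v' => α u v') =ᶠ[𝓝 v]
        fun v' => (2:ℝ)⁻¹ • (f ((u:ℍ[ℝ]) + v' • J) + f ((u:ℍ[ℝ]) + v' • (-J))) := by
      filter_upwards [hrepv, hrepv2] with v' h1 h2
      rw [h1, h2, neg_mul]
      module
    exact ((hφ.differentiableAt.add hψ).const_smul ((2:ℝ)⁻¹)).congr_of_eventuallyEq heq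
  have hβv : DifferentiableAt ℝ (fun v' => β u v') v := by
    have heq : (fun v' => β u v') =ᶠ[𝓝 v]
        fun v' => (2:ℝ)⁻¹ • ((-J) * (f ((u:ℍ[ℝ]) + v' • J) - f ((u:ℍ[ℝ]) + v' • (-J)))) := by
      filter_upwards [hrepv, hrepv2] with v' h1 h2
      rw [h1, h2]
      have h3 : (α u v' + J * β u v') - (α u v' + (-J) * β u v') = J * β u v' + J * β u v' := by
        rw [neg_mul]; abel
      rw [h3, mul_add, neg_mul, ← mul_assoc, hJJ]
      simp only [neg_one_mul, neg_neg]
      rw [← two_smul ℝ, smul_smul]; norm_num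
    exact (((hφ.differentiableAt.sub hψ).const_mul (-J)).const_smul ((2:ℝ)⁻¹)).congr_of_eventuallyEq heq
  set Av := deriv (fun v' => α u v') v with hAvdef
  set Bv := deriv (fun v' => β u v') v with hBvdef
  have hAv : HasDerivAt (fun v' => α u v') Av v := hαv.hasDerivAt
  have hBv : HasDerivAt (fun v' => β u v') Bv v := hβv.hasDerivAt
  refine ⟨hAv, hBv, ?_, ?_, ?_⟩
  · have hχ : HasDerivAt (fun u' : ℝ => f ((u':ℍ[ℝ]) + v • J)) (fderiv ℝ f q 1) u :=
      coe_curve_deriv (hfd q hqU) hq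
    have hrepu : ∀ᶠ u' : ℝ in 𝓝 u, f ((u':ℍ[ℝ]) + v • J) = α u' v + J * β u' v := by
      have hc : Continuous fun u' : ℝ => (u':ℍ[ℝ]) + v • J := by
        have : Continuous fun u' : ℝ => (u':ℍ[ℝ]) := by
          simp only [coe_eq_smul_one]; exact continuous_id.smul continuous_const
        exact this.add continuous_const
      have hmem : ∀ᶠ u' : ℝ in 𝓝 u, (u':ℍ[ℝ]) + v • J ∈ U :=
        hc.continuousAt.eventually_mem (hU.mem_nhds (by simpa using hqU))
      filter_upwards [hmem] with u' hu' using hrep _ hu' J hJ0 hJn u' v rfl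
    have hrhs : HasDerivAt (fun u' => α u' v + J * β u' v) (Bv + J * (-Av)) u :=
      (hCR u v).1.add ((hCR u v).2.const_mul J)
    have := hrhs.congr_of_eventuallyEq hrepu
    exact this.unique hχ ▸ rfl
  · have hrhs : HasDerivAt (fun v' => α u v' + J * β u v') (Av + J * Bv) v :=
      hAv.add (hBv.const_mul J)
    have := hrhs.congr_of_eventuallyEq hrepv
    exact (this.unique hφ) ▸ rfl
  · intro K hK0 hKJ
    by_cases hKz : K = 0
    · simp [hKz]
    have hJK : ⟪J, K⟫ = 0 := by rw [real_inner_comm]; exact hKJ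
    set r : ℝ → ℝ := fun t => Real.sqrt (v^2 + ‖K‖^2 * t^2) with hrdef
    have hpos : ∀ t : ℝ, 0 < v^2 + ‖K‖^2 * t^2 := fun t => by positivity
    have hrpos : ∀ t, 0 < r t := fun t => Real.sqrt_pos.mpr (hpos t)
    have hr0 : r 0 = v := by
      simp only [hrdef]
      norm_num
      exact Real.sqrt_sq hv.le
    have hnorm : ∀ t : ℝ, ‖v • J + t • K‖ = r t := by
      intro t
      have h1 : ‖v • J + t • K‖^2 = v^2 + ‖K‖^2 * t^2 := by
        rw [norm_add_sq_real, real_inner_smul_left, real_inner_smul_right, hJK,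
          norm_smul, norm_smul, hJn, Real.norm_eq_abs, Real.norm_eq_abs]
        simp [mul_pow, sq_abs]
        ring
      calc ‖v • J + t • K‖ = Real.sqrt (‖v • J + t • K‖^2) :=
            (Real.sqrt_sq (norm_nonneg _)).symm
        _ = r t := by rw [h1]
    have hp : HasDerivAt (fun t : ℝ => v^2 + ‖K‖^2 * t^2) 0 0 := by
      have := ((hasDerivAt_pow 2 (0:ℝ)).const_mul (‖K‖^2)).const_add (v^2)
      simpa using this
    have hsq : HasDerivAt Real.sqrt (1 / (2 * Real.sqrt (v ^ 2)))
        ((fun t : ℝ => v^2 + ‖K‖^2 * t^2) 0) := by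
      have h0 : (fun t : ℝ => v^2 + ‖K‖^2 * t^2) 0 = v^2 := by norm_num
      rw [h0]
      exact Real.hasDerivAt_sqrt (by positivity)
    have hr' : HasDerivAt r 0 0 := by
      have := hsq.comp 0 hp
      simpa [hrdef, Function.comp_def] using this
    set Jt : ℝ → ℍ[ℝ] := fun t => (r t)⁻¹ • (v • J + t • K) with hJtdef
    have hJt0 : Jt 0 = J := by
      simp only [hJtdef, hr0]
      rw [zero_smul, add_zero, smul_smul, inv_mul_cancel₀ hv.ne', one_smul]
    have hJtre : ∀ t, (Jt t).re = 0 := by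
      intro t; simp [hJtdef, hJ0, hK0]
    have hJtn : ∀ t, ‖Jt t‖ = 1 := by
      intro t
      rw [hJtdef, norm_smul, hnorm, Real.norm_eq_abs, abs_inv, abs_of_pos (hrpos t),
        inv_mul_cancel₀ (hrpos t).ne']
    have hdecomp : ∀ t : ℝ, q + t • K = (u:ℍ[ℝ]) + (r t) • Jt t := by
      intro t
      rw [hJtdef]
      simp only []
      rw [smul_inv_smul₀ (hrpos t).ne', hq, add_assoc]
    have hUt : ∀ᶠ t : ℝ in 𝓝 0, q + t • K ∈ U := by
      have hc : Continuous fun t : ℝ => q + t • K :=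
        continuous_const.add (continuous_id.smul continuous_const)
      exact hc.continuousAt.eventually_mem (hU.mem_nhds (by simpa using hqU))
    have hrept : ∀ᶠ t : ℝ in 𝓝 0, f (q + t • K) = α u (r t) + Jt t * β u (r t) := by
      filter_upwards [hUt] with t ht
      exact hrep _ ht (Jt t) (hJtre t) (hJtn t) u (r t) (hdecomp t)
    have hAvr : HasDerivAt (fun v' => α u v') Av (r 0) := hr0 ▸ hAv
    have hBvr : HasDerivAt (fun v' => β u v') Bv (r 0) := hr0 ▸ hBv
    have hαr : HasDerivAt (fun t => α u (r t)) ((0:ℝ) • Av) 0 := hAvr.scomp 0 hr'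
    have hβr : HasDerivAt (fun t => β u (r t)) ((0:ℝ) • Bv) 0 := hBvr.scomp 0 hr'
    have hinv : HasDerivAt (fun t => (r t)⁻¹) 0 0 := by
      have := hr'.inv (by rw [hr0]; exact hv.ne')
      simpa [Pi.inv_def] using this
    have hvec : HasDerivAt (fun t : ℝ => v • J + t • K) K 0 := by
      simpa using ((hasDerivAt_id (0:ℝ)).smul_const K).const_add (v • J)
    have hJt' : HasDerivAt Jt (v⁻¹ • K) 0 := by
      have := hinv.smul hvec
      simpa [hJtdef, hr0, Pi.smul_def'] using this
    have hmul : HasDerivAt (fun t => Jt t * β u (r t))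
        ((v⁻¹ • K) * β u v + J * ((0:ℝ) • Bv)) 0 := by
      have := hJt'.mul hβr
      rwa [hJt0, hr0] at this
    have hRHS : HasDerivAt (fun t => α u (r t) + Jt t * β u (r t))
        (((0:ℝ) • Av) + ((v⁻¹ • K) * β u v + J * ((0:ℝ) • Bv))) 0 := hαr.add hmul
    have hLHS : HasDerivAt (fun t : ℝ => f (q + t • K)) (fderiv ℝ f q K) 0 :=
      curve_deriv (hfd q hqU) K
    have := hLHS.unique (hRHS.congr_of_eventuallyEq hrept)
    rw [this]
    simp [smul_mul_assoc]

lemma Dop_slice {U : Set ℍ[ℝ]} (hU : IsOpen U)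
    (hax : ∀ q ∈ U, ∀ J : ℍ[ℝ], J.re = 0 → ‖J‖ = 1 → (q.re : ℍ[ℝ]) + ‖q.im‖ • J ∈ U)
    {f : ℍ[ℝ] → ℍ[ℝ]} (hfd : ∀ q ∈ U, DifferentiableAt ℝ f q)
    {α β : ℝ → ℝ → ℍ[ℝ]}
    (hCR : ∀ u v : ℝ, HasDerivAt (fun u' => α u' v) (deriv (fun v' => β u v') v) u ∧
      HasDerivAt (fun u' => β u' v) (-(deriv (fun v' => α u v') v)) u)
    (hrep : ∀ q ∈ U, ∀ J : ℍ[ℝ], J.re = 0 → ‖J‖ = 1 → ∀ u v : ℝ,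
      q = (u : ℍ[ℝ]) + v • J → f q = α u v + J * β u v)
    {u v : ℝ} {J : ℍ[ℝ]} (hJ0 : J.re = 0) (hJn : ‖J‖ = 1) (hv : 0 < v)
    (hqU : (u : ℍ[ℝ]) + v • J ∈ U) :
    Dop f ((u:ℍ[ℝ]) + v • J) = (-2*v⁻¹) • β u v := by
  obtain ⟨hAv, hBv, h1, hJd, hK⟩ := slice_package hU hax hfd hCR hrep hJ0 hJn hv hqU
  have hn := unit_im_sq_sum hJ0 hJn
  have hJJself : ⟪J, J⟫ = 1 := by
    rw [real_inner_self_eq_norm_mul_norm, hJn]; ring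
  set q : ℍ[ℝ] := (u:ℍ[ℝ]) + v • J with hq
  set L := fderiv ℝ f q with hL
  have hKa : ∀ (e : ℍ[ℝ]) (j : ℝ), e.re = 0 → ⟪e, J⟫ = j →
      L (e - j • J) = v⁻¹ • ((e - j • J) * β u v) := by
    intro e j he hj
    exact hK _ (by simp [he, hJ0]) (by rw [inner_sub_left, real_inner_smul_left, hj, hJJself]; ring)
  have hLe : ∀ (e : ℍ[ℝ]) (j : ℝ), e.re = 0 → ⟪e, J⟫ = j →
      L e = j • L J + v⁻¹ • ((e - j • J) * β u v) := by
    intro e j he hj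
    have hdec : e = j • J + (e - j • J) := by abel
    calc L e = L (j • J + (e - j • J)) := by rw [← hdec]
      _ = j • L J + L (e - j • J) := by rw [map_add, map_smul]
      _ = j • L J + v⁻¹ • ((e - j • J) * β u v) := by rw [hKa e j he hj]
  have he1 : L e1 = J.imI • L J + v⁻¹ • ((e1 - J.imI • J) * β u v) :=
    hLe e1 J.imI rfl (inner_e1_q J)
  have he2 : L e2 = J.imJ • L J + v⁻¹ • ((e2 - J.imJ • J) * β u v) :=
    hLe e2 J.imJ rfl (inner_e2_q J)
  have he3 : L e3 = J.imK • L J + v⁻¹ • ((e3 - J.imK • J) * β u v) :=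
    hLe e3 J.imK rfl (inner_e3_q J)
  have hDop : Dop f q = L 1 + e1 * L e1 + e2 * L e2 + e3 * L e3 := by
    simp only [Dop, pd, hL]
  rw [hDop, h1, he1, he2, he3, hJd]
  exact sum_identity J (deriv (fun v' => α u v') v) (deriv (fun v' => β u v') v)
    (β u v) hJ0 hn v⁻¹

end Auxiliary

section MainProof

open Quaternion Topology Filter
open scoped RealInnerProductSpace

theorem D_kernel_slice_const (U : Set ℍ[ℝ]) (hU : IsOpen U) (hconn : IsConnected U)
    (hreal : ∃ r : ℝ, (r : ℍ[ℝ]) ∈ U)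
    (hax : ∀ q ∈ U, ∀ J : ℍ[ℝ], J.re = 0 → ‖J‖ = 1 → (q.re : ℍ[ℝ]) + ‖q.im‖ • J ∈ U)
    (f g : ℍ[ℝ] → ℍ[ℝ])
    (hf : ContDiffOn ℝ 1 f U) (hg : ContDiffOn ℝ 1 g U)
    (hshf : IsSliceHyp U f) (hshg : IsSliceHyp U g)
    (hD : ∀ q ∈ U, Dop (fun x => f x - g x) q = 0) :
    ∃ c : ℍ[ℝ], ∀ q ∈ U, f q - g q = c := by
  classical
  obtain ⟨αf, βf, -, hCRf, hrepf⟩ := hshf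
  obtain ⟨αg, βg, -, hCRg, hrepg⟩ := hshg
  have hfd : ∀ q ∈ U, DifferentiableAt ℝ f q := fun q hq =>
    (hf.contDiffAt (hU.mem_nhds hq)).differentiableAt one_ne_zero
  have hgd : ∀ q ∈ U, DifferentiableAt ℝ g q := fun q hq =>
    (hg.contDiffAt (hU.mem_nhds hq)).differentiableAt one_ne_zero
  -- Step 1: the β's of f and g agree off the real axis
  have hbeta : ∀ (u v : ℝ), 0 < v → ∀ J : ℍ[ℝ], J.re = 0 → ‖J‖ = 1 →
      (u:ℍ[ℝ]) + v • J ∈ U → βf u v = βg u v := by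
    intro u v hv J hJ0 hJn hqU
    have h1 := Dop_slice hU hax hfd hCRf hrepf hJ0 hJn hv hqU
    have h2 := Dop_slice hU hax hgd hCRg hrepg hJ0 hJn hv hqU
    have h3 : Dop (fun x => f x - g x) ((u:ℍ[ℝ]) + v • J)
        = Dop f ((u:ℍ[ℝ]) + v • J) - Dop g ((u:ℍ[ℝ]) + v • J) := by
      simp only [Dop, pd, fderiv_fun_sub (hfd _ hqU) (hgd _ hqU), ContinuousLinearMap.sub_apply,
        mul_sub]
      abel
    have h0 := hD _ hqU
    rw [h3, h1, h2] at h0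
    have h4 : (-2*v⁻¹) • (βf u v - βg u v) = 0 := by
      rw [smul_sub]; exact sub_eq_zero.mpr (sub_eq_zero.mp h0)
    have hne : (-2*v⁻¹ : ℝ) ≠ 0 := by
      have hvi : (0:ℝ) < v⁻¹ := inv_pos.mpr hv
      intro hcon
      nlinarith
    exact sub_eq_zero.mp ((smul_eq_zero.mp h4).resolve_left hne)
  -- Step 2: the derivative of f - g vanishes off the real axis
  have hfder0 : ∀ q ∈ U, q.im ≠ 0 → fderiv ℝ (fun x => f x - g x) q = 0 := by
    intro q hqU hqim
    set v : ℝ := ‖q.im‖ with hv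
    have hvpos : 0 < v := norm_pos_iff.mpr hqim
    obtain ⟨J, hJ0, hJn, hq⟩ : ∃ J : ℍ[ℝ], J.re = 0 ∧ ‖J‖ = 1 ∧ q = ((q.re : ℝ) : ℍ[ℝ]) + v • J := by
      refine ⟨v⁻¹ • q.im, by simp, ?_, ?_⟩
      · rw [norm_smul, Real.norm_eq_abs, abs_inv, abs_of_pos hvpos, ← hv,
          inv_mul_cancel₀ hvpos.ne']
      · rw [smul_inv_smul₀ hvpos.ne']
        exact (Quaternion.re_add_im q).symm
    set u : ℝ := q.re with hu
    have hqU' : (u:ℍ[ℝ]) + v • J ∈ U := hq ▸ hqU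
    obtain ⟨hAvf, hBvf, h1f, hJf, hKf⟩ := slice_package hU hax hfd hCRf hrepf hJ0 hJn hvpos hqU'
    obtain ⟨hAvg, hBvg, h1g, hJg, hKg⟩ := slice_package hU hax hgd hCRg hrepg hJ0 hJn hvpos hqU'
    have hJJself : ⟪J, J⟫ = 1 := by
      rw [real_inner_self_eq_norm_mul_norm, hJn]; ring
    -- equal v-derivatives of β
    have hUv : ∀ᶠ v' in 𝓝 v, (u:ℍ[ℝ]) + v' • J ∈ U := by
      have hc : Continuous fun v' : ℝ => (u:ℍ[ℝ]) + v' • J :=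
        continuous_const.add (continuous_id.smul continuous_const)
      exact hc.continuousAt.eventually_mem (hU.mem_nhds (by simpa using hqU'))
    have hposev : ∀ᶠ v' in 𝓝 v, (0:ℝ) < v' := eventually_gt_nhds hvpos
    have hβev : (fun v' => βf u v') =ᶠ[𝓝 v] fun v' => βg u v' := by
      filter_upwards [hUv, hposev] with v' hm hp using hbeta u v' hp J hJ0 hJn hm
    have hBveq : deriv (fun v' => βf u v') v = deriv (fun v' => βg u v') v := hβev.deriv_eq
    -- equal v-derivatives of α, via the CR equations and agreement of β in the u direction
    have hUu : ∀ᶠ u' : ℝ in 𝓝 u, (u':ℍ[ℝ]) + v • J ∈ U := by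
      have hc : Continuous fun u' : ℝ => (u':ℍ[ℝ]) + v • J := by
        have : Continuous fun u' : ℝ => (u':ℍ[ℝ]) := by
          simp only [coe_eq_smul_one]; exact continuous_id.smul continuous_const
        exact this.add continuous_const
      exact hc.continuousAt.eventually_mem (hU.mem_nhds (by simpa using hqU'))
    have hβuev : (fun u' => βg u' v) =ᶠ[𝓝 u] fun u' => βf u' v := by
      filter_upwards [hUu] with u' hm using (hbeta u' v hvpos J hJ0 hJn hm).symm
    have hAveq : deriv (fun v' => αf u v') v = deriv (fun v' => αg u v') v := by
      have hf' := (hCRf u v).2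
      have hg' := ((hCRg u v).2).congr_of_eventuallyEq hβuev.symm
      have := hf'.unique hg'
      exact neg_injective this
    have hBeq : βf u v = βg u v := hbeta u v hvpos J hJ0 hJn hqU'
    -- the difference of the fderivs kills a spanning set
    rw [hq]
    have hsub : fderiv ℝ (fun x => f x - g x) ((u:ℍ[ℝ]) + v • J)
        = fderiv ℝ f ((u:ℍ[ℝ]) + v • J) - fderiv ℝ g ((u:ℍ[ℝ]) + v • J) :=
      fderiv_sub (hfd _ hqU') (hgd _ hqU')
    rw [hsub]
    set Lf := fderiv ℝ f ((u:ℍ[ℝ]) + v • J) with hLf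
    set Lg := fderiv ℝ g ((u:ℍ[ℝ]) + v • J) with hLg
    have hS1 : Lf 1 - Lg 1 = 0 := by
      rw [h1f, h1g, hAveq, hBveq, sub_self]
    have hSJ : Lf J - Lg J = 0 := by
      rw [hJf, hJg, hAveq, hBveq, sub_self]
    have hSK : ∀ K : ℍ[ℝ], K.re = 0 → ⟪K, J⟫ = 0 → Lf K - Lg K = 0 := by
      intro K h1 h2
      rw [hKf K h1 h2, hKg K h1 h2, hBeq, sub_self]
    refine ContinuousLinearMap.ext fun x => ?_
    have hdec : x = x.re • (1:ℍ[ℝ]) + (⟪x.im, J⟫ • J + (x.im - ⟪x.im, J⟫ • J)) := by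
      have h5 : ⟪x.im, J⟫ • J + (x.im - ⟪x.im, J⟫ • J) = x.im := by abel
      rw [h5, ← coe_eq_smul_one]
      exact (Quaternion.re_add_im x).symm
    have hK0 : (x.im - ⟪x.im, J⟫ • J).re = 0 := by simp [hJ0]
    have hKJ : ⟪x.im - ⟪x.im, J⟫ • J, J⟫ = 0 := by
      rw [inner_sub_left, real_inner_smul_left, hJJself]; ring
    rw [ContinuousLinearMap.sub_apply, ContinuousLinearMap.zero_apply]
    conv_lhs => rw [hdec]
    rw [map_add, map_add, map_smul, map_smul, map_add, map_add, map_smul, map_smul]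
    have := hSK _ hK0 hKJ
    have hS1' := hS1
    have hSJ' := hSJ
    rw [sub_eq_zero] at this hS1' hSJ'
    rw [hS1', hSJ', this]
    abel
  -- Step 3: the derivative vanishes everywhere on U (continuity + density)
  have hcont : ContinuousOn (fderiv ℝ fun x => f x - g x) U :=
    (hf.sub hg).continuousOn_fderiv_of_isOpen hU le_rfl
  have hall : ∀ q ∈ U, fderiv ℝ (fun x => f x - g x) q = 0 := by
    intro q hqU
    by_cases hqim : q.im = 0
    · have hc : Continuous fun t : ℝ => q + t • e1 :=
        continuous_const.add (continuous_id.smul continuous_const)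
      have ht1 : Tendsto (fun t : ℝ => q + t • e1) (𝓝[>] (0:ℝ)) (𝓝 q) := by
        have := (hc.tendsto 0).mono_left (nhdsWithin_le_nhds (s := Set.Ioi (0:ℝ)))
        simpa using this
      have hmem : ∀ᶠ t : ℝ in 𝓝[>] (0:ℝ), q + t • e1 ∈ U :=
        ht1.eventually (hU.eventually_mem hqU)
      have ht2 : Tendsto (fun t : ℝ => q + t • e1) (𝓝[>] (0:ℝ)) (𝓝[U] q) :=
        tendsto_nhdsWithin_iff.mpr ⟨ht1, hmem⟩
      have hlim : Tendsto (fun t : ℝ => fderiv ℝ (fun x => f x - g x) (q + t • e1))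
          (𝓝[>] (0:ℝ)) (𝓝 (fderiv ℝ (fun x => f x - g x) q)) :=
        ((hcont q hqU).tendsto).comp ht2
      have hICmp : q.imI = 0 ∧ q.imJ = 0 ∧ q.imK = 0 := by
        refine ⟨?_, ?_, ?_⟩
        · simpa using congrArg QuaternionAlgebra.imI hqim
        · simpa using congrArg QuaternionAlgebra.imJ hqim
        · simpa using congrArg QuaternionAlgebra.imK hqim
      have hev : ∀ᶠ t : ℝ in 𝓝[>] (0:ℝ),
          fderiv ℝ (fun x => f x - g x) (q + t • e1) = 0 := by
        filter_upwards [hmem, self_mem_nhdsWithin] with t htU htpos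
        refine hfder0 _ htU ?_
        intro hcon
        have : (q + t • e1).imI = 0 := by simpa using congrArg QuaternionAlgebra.imI hcon
        rw [Quaternion.imI_add] at this
        simp only [e1_imI, Quaternion.imI_smul, smul_eq_mul, mul_one] at this
        rw [hICmp.1] at this
        simp at this
        exact (lt_irrefl (0:ℝ)) (this ▸ htpos)
      exact tendsto_nhds_unique (hlim.congr' hev) tendsto_const_nhds
    · exact hfder0 q hqU hqim
  -- Step 4: local constancy + connectedness
  obtain ⟨q₀, hq₀⟩ := hconn.nonempty
  refine ⟨f q₀ - g q₀, ?_⟩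
  have hlocal : ∀ q ∈ U, ∃ ε > 0, Metric.ball q ε ⊆ U ∧
      ∀ y ∈ Metric.ball q ε, f y - g y = f q - g q := by
    intro q hq
    obtain ⟨ε, hε, hball⟩ := Metric.isOpen_iff.mp hU q hq
    refine ⟨ε, hε, hball, fun y hy => ?_⟩
    exact (convex_ball q ε).is_const_of_fderivWithin_eq_zero
      (fun z hz => ((hfd z (hball hz)).sub (hgd z (hball hz))).differentiableWithinAt)
      (fun z hz => by
        rw [fderivWithin_of_isOpen Metric.isOpen_ball hz]; exact hall z (hball hz))
      hy (Metric.mem_ball_self hε)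
  set c : ℍ[ℝ] := f q₀ - g q₀ with hc
  set A : Set ℍ[ℝ] := {x | x ∈ U ∧ f x - g x = c} with hA
  set B : Set ℍ[ℝ] := {x | x ∈ U ∧ f x - g x ≠ c} with hB
  have hAopen : IsOpen A := by
    rw [Metric.isOpen_iff]
    intro x hx
    obtain ⟨ε, hε, hball, hconst⟩ := hlocal x hx.1
    exact ⟨ε, hε, fun y hy => ⟨hball hy, (hconst y hy).trans hx.2⟩⟩
  have hBopen : IsOpen B := by
    rw [Metric.isOpen_iff]
    intro x hx
    obtain ⟨ε, hε, hball, hconst⟩ := hlocal x hx.1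
    exact ⟨ε, hε, fun y hy => ⟨hball hy, fun hcon => hx.2 ((hconst y hy).symm.trans hcon)⟩⟩
  intro q hq
  by_contra hne
  obtain ⟨z, hzU, hzA, hzB⟩ := hconn.isPreconnected A B hAopen hBopen
    (fun x hx => by by_cases h : f x - g x = c
                    · exact Or.inl ⟨hx, h⟩
                    · exact Or.inr ⟨hx, h⟩)
    ⟨q₀, hq₀, hq₀, rfl⟩ ⟨q, hq, hq, hne⟩
  exact hzB.2 hzA.2

end MainProof
end
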